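/- Let K be a field and n ≥ 4. Let B be the trivial extension algebra T(KΓ) of the path algebra of the D_n quiver Γ with vertices 1,…,n, arrows a_i : i → i+1 for 1 ≤ i ≤ n−3, a_{n−2} : n−2 → n−1 and a_{n−1} : n−2 → n. Then B is isomorphic to KQ/I, where Q is the quiver with vertices 1,…,n and arrows α_i : i → i+1 for 1 ≤ i ≤ n−3, γ_{n−1} : n−2 → n−1, γ_n : n−2 → n, β_{n−1} : n−1 → 1, β_n : n → 1, and I is the two-sided ideal generated by: β_{n−1}γ_{n−1} − β_nγ_n; the cycles α_i⋯α_1 β_n γ_n α_{n−3}⋯α_i for all i; γ_n α_{n−3}⋯α_1 β_{n−1}; and γ_{n−1} α_{n−3}⋯α_1 β_n (paths composed right-to-left). -/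

import Mathlib

/-- The product `α_{i+m−1} ⋯ α_{i+1} α_i` of `m` consecutive arrows, composed
right-to-left (so `chainProd α i m` is a path starting at the vertex `i`). -/
def chainProd {R : Type} [Ring R] (α : ℕ → R) (i : ℕ) : ℕ → R
  | 0 => 1
  | m + 1 => α (i + m) * chainProd α i m

namespace S9x

variable {R : Type} [Ring R]

theorem chainProd_congr {α β : ℕ → R} {i : ℕ} :
    ∀ {m}, (∀ k, k < m → α (i + k) = β (i + k)) → chainProd α i m = chainProd β i m
  | 0, _ => rfl
  | m + 1, h => by
    show α (i + m) * chainProd α i m = β (i + m) * chainProd β i m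
    rw [h m (Nat.lt_succ_self m), chainProd_congr (fun k hk => h k (hk.trans (Nat.lt_succ_self m)))]

theorem chainProd_add (α : ℕ → R) (i k : ℕ) :
    ∀ m, chainProd α i (k + m) = chainProd α (i + k) m * chainProd α i k
  | 0 => (one_mul _).symm
  | m + 1 => by
    show chainProd α i (k + m + 1) = α (i + k + m) * chainProd α (i + k) m * chainProd α i k
    show α (i + (k + m)) * chainProd α i (k + m) = _
    rw [chainProd_add α i k m, ← mul_assoc, Nat.add_assoc]

/-- pointed chain: path from `i` of length `m`, with the idempotent at `i` built in. -/
def ap (e α : ℕ → R) (i m : ℕ) : R := chainProd α i m * e i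

/-- the hypotheses bundle for a `D_n`-type generator system. -/
structure PreC (n : ℕ) (e α : ℕ → R) : Prop where
  hε0 : ∀ i, ¬ (1 ≤ i ∧ i ≤ n) → e i = 0
  ha0 : ∀ i, ¬ (1 ≤ i ∧ i ≤ n - 1) → α i = 0
  hidem : ∀ i, e i * e i = e i
  horth : ∀ i j, i ≠ j → e i * e j = 0
  hsum : ∑ i ∈ Finset.Icc 1 n, e i = 1
  hcomp : ∀ i, 1 ≤ i → i ≤ n - 3 → e (i + 1) * α i = α i ∧ α i * e i = α i
  hcomp2 : e (n - 1) * α (n - 2) = α (n - 2) ∧ α (n - 2) * e (n - 2) = α (n - 2)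
  hcomp3 : e n * α (n - 1) = α (n - 1) ∧ α (n - 1) * e (n - 2) = α (n - 1)

/-- target of arrow `i` -/
def tgt (n i : ℕ) : ℕ := if i = n - 1 then n else i + 1
/-- source of arrow `i` -/
def src (n i : ℕ) : ℕ := if i = n - 1 then n - 2 else i

namespace PreC

variable {n : ℕ} {e α : ℕ → R} (d : PreC n e α) (hn : 4 ≤ n)
include d hn

theorem comp {i : ℕ} (h1 : 1 ≤ i) (h2 : i ≤ n - 1) :
    e (tgt n i) * α i = α i ∧ α i * e (src n i) = α i := by
  rcases Nat.lt_or_ge i (n - 2) with h | h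
  · have hi : i ≤ n - 3 := by omega
    have : tgt n i = i + 1 := by unfold tgt; rw [if_neg (by omega)]
    rw [this]
    have : src n i = i := by unfold src; rw [if_neg (by omega)]
    rw [this]
    exact d.hcomp i h1 hi
  · rcases Nat.lt_or_ge i (n - 1) with h' | h'
    · have hi : i = n - 2 := by omega
      subst hi
      have h1 : tgt n (n - 2) = n - 1 := by unfold tgt; rw [if_neg (by omega)]; omega
      have h2 : src n (n - 2) = n - 2 := by unfold src; rw [if_neg (by omega)]
      rw [h1, h2]; exact d.hcomp2
    · have hi : i = n - 1 := by omega
      subst hi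
      have h1 : tgt n (n - 1) = n := by unfold tgt; rw [if_pos rfl]
      have h2 : src n (n - 1) = n - 2 := by unfold src; rw [if_pos rfl]
      rw [h1, h2]; exact d.hcomp3

theorem e_mul_a {i : ℕ} (h1 : 1 ≤ i) (h2 : i ≤ n - 1) (m : ℕ) :
    e m * α i = if m = tgt n i then α i else 0 := by
  conv_lhs => rw [← (d.comp hn h1 h2).1, ← mul_assoc]
  split
  · next h => rw [h, d.hidem, (d.comp hn h1 h2).1]
  · next h => rw [d.horth _ _ h, zero_mul]

theorem a_mul_e {i : ℕ} (h1 : 1 ≤ i) (h2 : i ≤ n - 1) (m : ℕ) :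
    α i * e m = if m = src n i then α i else 0 := by
  conv_lhs => rw [← (d.comp hn h1 h2).2, mul_assoc]
  split
  · next h => rw [h, d.hidem, (d.comp hn h1 h2).2]
  · next h => rw [d.horth _ _ fun hh => h hh.symm, mul_zero]

omit hn in
theorem ap_mul_e (i m j : ℕ) : ap e α i m * e j = if j = i then ap e α i m else 0 := by
  unfold ap
  rw [mul_assoc]
  split
  · next h => rw [h, d.hidem]
  · next h => rw [d.horth _ _ fun hh => h hh.symm, mul_zero]

theorem e_mul_ap {i m : ℕ} (h1 : 1 ≤ i) (h2 : i + m ≤ n - 2) (j : ℕ) :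
    e j * ap e α i m = if j = i + m then ap e α i m else 0 := by
  cases m with
  | zero =>
    show e j * (1 * e i) = _
    rw [one_mul]
    split
    · next h => simp only [Nat.add_zero] at h; rw [h, d.hidem]; show e i = 1 * e i; rw [one_mul]
    · next h => exact d.horth _ _ (by omega)
  | succ m =>
    show e j * (α (i + m) * chainProd α i m * e i) = _
    have hr : e j * α (i + m) = if j = tgt n (i + m) then α (i + m) else 0 :=
      d.e_mul_a hn (by omega) (by omega) j
    have ht : tgt n (i + m) = i + m + 1 := by unfold tgt; rw [if_neg (by omega)]
    rw [ht] at hr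
    rw [← mul_assoc, ← mul_assoc, hr]
    split
    · next h =>
      rw [if_pos (by omega)]
      show α (i + m) * chainProd α i m * e i = ap e α i (m + 1)
      rfl
    · next h => rw [if_neg (by omega), zero_mul, zero_mul]

theorem ap_mul_ap {i m : ℕ} (h1 : 1 ≤ i) (h2 : i + m ≤ n - 2) (j m' : ℕ) :
    ap e α j m' * ap e α i m = if j = i + m then ap e α i (m + m') else 0 := by
  show chainProd α j m' * e j * ap e α i m = _
  rw [mul_assoc, d.e_mul_ap hn h1 h2 j]
  split
  · next h =>
    subst h
    show chainProd α (i + m) m' * (chainProd α i m * e i) = chainProd α i (m + m') * e i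
    rw [chainProd_add α i m m', ← mul_assoc]
  · next h => rw [mul_zero]

end PreC

end S9x

namespace S9x

variable {R : Type} [Ring R]

/-- there is a (unique) path from `i` to `j` in the `D_n` quiver -/
def reach (n i j : ℕ) : Prop :=
  1 ≤ i ∧ ((i ≤ j ∧ j ≤ n - 2) ∨ ((j = n - 1 ∨ j = n) ∧ (i ≤ n - 2 ∨ i = j)))

instance (n i j : ℕ) : Decidable (reach n i j) := by unfold reach; infer_instance

theorem reach_trans {n i j l : ℕ} (hn : 4 ≤ n) (h1 : reach n i j) (h2 : reach n j l) :
    reach n i l := by unfold reach at *; omega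

theorem reach_self {n i : ℕ} (hn : 4 ≤ n) (h1 : 1 ≤ i) (h2 : i ≤ n) : reach n i i := by
  unfold reach; omega

def pairs (n : ℕ) : Finset (ℕ × ℕ) :=
  (Finset.Icc 1 n ×ˢ Finset.Icc 1 n).filter fun p => reach n p.1 p.2

theorem mem_pairs {n : ℕ} (hn : 4 ≤ n) {p : ℕ × ℕ} : p ∈ pairs n ↔ reach n p.1 p.2 := by
  unfold pairs
  rw [Finset.mem_filter, Finset.mem_product, Finset.mem_Icc, Finset.mem_Icc]
  unfold reach
  omega

/-- the path from `i` to `j` in the generator system `(e, α)`. -/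
def pth (n : ℕ) (e α : ℕ → R) (i j : ℕ) : R :=
  if j ≤ n - 2 then ap e α i (j - i)
  else if j = n - 1 then (if i = n - 1 then e i else α (n - 2) * ap e α i (n - 2 - i))
  else if i = n then e i else α (n - 1) * ap e α i (n - 2 - i)

section shapes
variable {n : ℕ} (e α : ℕ → R)

theorem pth_eq_ap {i j : ℕ} (h : j ≤ n - 2) : pth n e α i j = ap e α i (j - i) := by
  unfold pth; rw [if_pos h]

theorem pth_eq_top1 (hn : 4 ≤ n) {i : ℕ} (hi : i ≤ n - 2) :
    pth n e α i (n - 1) = α (n - 2) * ap e α i (n - 2 - i) := by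
  unfold pth; rw [if_neg (by omega), if_pos rfl, if_neg (by omega)]

theorem pth_eq_e1 (hn : 4 ≤ n) : pth n e α (n - 1) (n - 1) = e (n - 1) := by
  unfold pth; rw [if_neg (by omega), if_pos rfl, if_pos rfl]

theorem pth_eq_top2 (hn : 4 ≤ n) {i : ℕ} (hi : i ≤ n - 2) :
    pth n e α i n = α (n - 1) * ap e α i (n - 2 - i) := by
  unfold pth; rw [if_neg (by omega), if_neg (by omega), if_neg (by omega)]

theorem pth_eq_e2 (hn : 4 ≤ n) : pth n e α n n = e n := by
  unfold pth; rw [if_neg (by omega), if_neg (by omega), if_pos rfl]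

end shapes

namespace PreC

variable {n : ℕ} {e α : ℕ → R} (d : PreC n e α) (hn : 4 ≤ n)
include d

theorem e_mul_e (m j : ℕ) : e m * e j = if m = j then e j else 0 := by
  split
  · next h => rw [h]; exact d.hidem j
  · next h => exact d.horth m j h

include hn

theorem pth_mul_e {i j : ℕ} (hij : reach n i j) (m : ℕ) :
    pth n e α i j * e m = if m = i then pth n e α i j else 0 := by
  have hi1 : 1 ≤ i := hij.1
  by_cases hj : j ≤ n - 2
  · rw [pth_eq_ap e α hj, d.ap_mul_e]
  · have hy : j = n - 1 ∨ j = n := by rcases hij with ⟨_, h' | h'⟩ <;> omega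
    by_cases hij' : i = j
    · rw [hij']
      rcases hy with h | h
      · rw [h, pth_eq_e1 e α hn, d.e_mul_e]
        by_cases hm : m = n - 1
        · rw [if_pos hm.symm, if_pos hm, hm]
        · rw [if_neg fun hh => hm hh.symm, if_neg hm]
      · rw [h, pth_eq_e2 e α hn, d.e_mul_e]
        by_cases hm : m = n
        · rw [if_pos hm.symm, if_pos hm, hm]
        · rw [if_neg fun hh => hm hh.symm, if_neg hm]
    · have hile : i ≤ n - 2 := by rcases hij with ⟨_, h' | h'⟩ <;> omega
      rcases hy with h | h
      · rw [h, pth_eq_top1 e α hn hile, mul_assoc, d.ap_mul_e]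
        split
        · rfl
        · rw [mul_zero]
      · rw [h, pth_eq_top2 e α hn hile, mul_assoc, d.ap_mul_e]
        split
        · rfl
        · rw [mul_zero]

theorem e_mul_pth {i j : ℕ} (hij : reach n i j) (m : ℕ) :
    e m * pth n e α i j = if m = j then pth n e α i j else 0 := by
  have hi1 : 1 ≤ i := hij.1
  by_cases hj : j ≤ n - 2
  · have hij' : i ≤ j := by rcases hij with ⟨_, h' | h'⟩ <;> omega
    rw [pth_eq_ap e α hj, d.e_mul_ap hn hi1 (by omega) m]
    have : i + (j - i) = j := by omega
    rw [this]
  · have hy : j = n - 1 ∨ j = n := by rcases hij with ⟨_, h' | h'⟩ <;> omega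
    by_cases hij' : i = j
    · rw [hij']
      rcases hy with h | h
      · rw [h, pth_eq_e1 e α hn, d.e_mul_e]
      · rw [h, pth_eq_e2 e α hn, d.e_mul_e]
    · have hile : i ≤ n - 2 := by rcases hij with ⟨_, h' | h'⟩ <;> omega
      rcases hy with h | h <;> rw [h]
      · rw [pth_eq_top1 e α hn hile, ← mul_assoc,
          d.e_mul_a hn (by omega) (by omega) m]
        have ht : tgt n (n - 2) = n - 1 := by unfold tgt; rw [if_neg (by omega)]; omega
        rw [ht]
        split
        · rfl
        · rw [zero_mul]
      · rw [pth_eq_top2 e α hn hile, ← mul_assoc,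
          d.e_mul_a hn (by omega) (by omega) m]
        have ht : tgt n (n - 1) = n := by unfold tgt; rw [if_pos rfl]
        rw [ht]
        split
        · rfl
        · rw [zero_mul]

theorem pth_self {i : ℕ} (h1 : 1 ≤ i) (h2 : i ≤ n) : pth n e α i i = e i := by
  rcases Nat.lt_or_ge i (n - 1) with h | h
  · rw [pth_eq_ap e α (by omega), Nat.sub_self]
    show 1 * e i = e i
    rw [one_mul]
  · rcases Nat.lt_or_ge i n with h' | h'
    · have : i = n - 1 := by omega
      subst this; exact pth_eq_e1 e α hn
    · have : i = n := by omega
      subst this; exact pth_eq_e2 e α hn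

theorem pth_mul {i j x y : ℕ} (h1 : reach n i j) (h2 : reach n x y) :
    pth n e α x y * pth n e α i j = if j = x then pth n e α i y else 0 := by
  by_cases hjx : j = x
  · subst hjx
    rw [if_pos rfl]
    have hi1 : 1 ≤ i := h1.1
    by_cases hy2 : y ≤ n - 2
    · have hjy : j ≤ y := by rcases h2 with ⟨_, h' | h'⟩ <;> omega
      have hijle : i ≤ j := by rcases h1 with ⟨_, h' | h'⟩ <;> omega
      rw [pth_eq_ap e α hy2, pth_eq_ap e α (j := j) (by omega), pth_eq_ap e α hy2,
        d.ap_mul_ap hn hi1 (by omega), if_pos (by omega)]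
      have : j - i + (y - j) = y - i := by omega
      rw [this]
    · have hy : y = n - 1 ∨ y = n := by rcases h2 with ⟨_, h' | h'⟩ <;> omega
      by_cases hjtriv : j = y
      · rw [hjtriv] at h1 ⊢
        have hy1 : 1 ≤ y := by rcases hy with h | h <;> omega
        have hyn : y ≤ n := by rcases hy with h | h <;> omega
        rw [d.pth_self hn hy1 hyn, d.e_mul_pth hn h1 y, if_pos rfl]
      · have hjle : j ≤ n - 2 := by rcases h2 with ⟨_, h' | h'⟩ <;> omega
        have hijle : i ≤ j := by rcases h1 with ⟨_, h' | h'⟩ <;> omega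
        have key : ap e α j (n - 2 - j) * ap e α i (j - i) = ap e α i (n - 2 - i) := by
          rw [d.ap_mul_ap hn hi1 (by omega), if_pos (by omega)]
          have : j - i + (n - 2 - j) = n - 2 - i := by omega
          rw [this]
        rw [pth_eq_ap e α (j := j) (by omega)]
        rcases hy with h | h <;> subst h
        · rw [pth_eq_top1 e α hn hjle, pth_eq_top1 e α hn (by omega), mul_assoc, key]
        · rw [pth_eq_top2 e α hn hjle, pth_eq_top2 e α hn (by omega), mul_assoc, key]
  · rw [if_neg hjx]
    have hh : pth n e α i j = e j * pth n e α i j := by rw [d.e_mul_pth hn h1 j, if_pos rfl]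
    rw [hh, ← mul_assoc, d.pth_mul_e hn h2 j, if_neg hjx, zero_mul]


/-- chains with length ≥ 1 absorb the idempotent at the source. -/
theorem chain_eq_ap {i m : ℕ} (h1 : 1 ≤ i) (hm : 1 ≤ m) (h2 : i + m ≤ n - 2) :
    chainProd α i m = ap e α i m := by
  induction m with
  | zero => omega
  | succ m ih =>
    cases Nat.eq_zero_or_pos m with
    | inl h0 =>
      subst h0
      show α i * 1 = (α i * 1) * e i
      rw [mul_one]
      have : α i * e (src n i) = α i := (d.comp hn h1 (by omega)).2
      have hs : src n i = i := by unfold src; rw [if_neg (by omega)]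
      rw [hs] at this
      rw [this]
    | inr hpos =>
      show α (i + m) * chainProd α i m = (α (i + m) * chainProd α i m) * e i
      rw [ih hpos (by omega), mul_assoc, d.ap_mul_e, if_pos rfl]

theorem pth_arrow {i : ℕ} (h1 : 1 ≤ i) (h2 : i ≤ n - 1) :
    pth n e α (src n i) (tgt n i) = α i := by
  have hap : ∀ k, 1 ≤ k → k ≤ n - 2 → ap e α k 0 = e k := fun k _ _ => one_mul (e k)
  rcases Nat.lt_or_ge i (n - 2) with h | h
  · have hs : src n i = i := by unfold src; rw [if_neg (by omega)]
    have ht : tgt n i = i + 1 := by unfold tgt; rw [if_neg (by omega)]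
    rw [hs, ht, pth_eq_ap e α (by omega)]
    have : i + 1 - i = 1 := by omega
    rw [this]
    show (α i * 1) * e i = α i
    rw [mul_one]
    have hss : src n i = i := by unfold src; rw [if_neg (by omega)]
    have := (d.comp hn h1 (by omega)).2
    rw [hss] at this
    exact this
  · rcases Nat.lt_or_ge i (n - 1) with h' | h'
    · have hi : i = n - 2 := by omega
      subst hi
      have hs : src n (n - 2) = n - 2 := by unfold src; rw [if_neg (by omega)]
      have ht : tgt n (n - 2) = n - 1 := by unfold tgt; rw [if_neg (by omega)]; omega
      rw [hs, ht, pth_eq_top1 e α hn (by omega), Nat.sub_self, hap _ (by omega) (by omega)]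
      exact d.hcomp2.2
    · have hi : i = n - 1 := by omega
      subst hi
      have hs : src n (n - 1) = n - 2 := by unfold src; rw [if_pos rfl]
      have ht : tgt n (n - 1) = n := by unfold tgt; rw [if_pos rfl]
      rw [hs, ht, pth_eq_top2 e α hn (by omega), Nat.sub_self, hap _ (by omega) (by omega)]
      exact d.hcomp3.2

end PreC

end S9x

namespace S9x

variable {R : Type} [Ring R]

/-- the "cycle completion" tail: dual path from `l` back to `1` through the β arrows. -/
def res (n : ℕ) (e α : ℕ → R) (b1 b2 : R) (l : ℕ) : R :=
  if l ≤ n - 2 then b2 * (α (n - 1) * ap e α l (n - 2 - l))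
  else if l = n - 1 then b1 else b2

/-- the complement in `KQ/I` of the path from `k` to `l`: the path from `l` back to `k`. -/
def cmpl (n : ℕ) (e α : ℕ → R) (b1 b2 : R) (k l : ℕ) : R :=
  pth n e α 1 k * res n e α b1 b2 l

structure PreP (n : ℕ) (e α : ℕ → R) (b1 b2 : R) : Prop where
  toPreC : PreC n e α
  hb1 : e 1 * b1 = b1 ∧ b1 * e (n - 1) = b1
  hb2 : e 1 * b2 = b2 ∧ b2 * e n = b2
  r1 : b1 * α (n - 2) = b2 * α (n - 1)
  r2 : ∀ i, 1 ≤ i → i ≤ n - 3 → ap e α 1 i * (b2 * (α (n - 1) * ap e α i (n - 2 - i))) = 0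
  r3 : α (n - 1) * (ap e α 1 (n - 3) * b1) = 0
  r4 : α (n - 2) * (ap e α 1 (n - 3) * b2) = 0

namespace PreP

variable {n : ℕ} {e α : ℕ → R} {b1 b2 : R} (p : PreP n e α b1 b2) (hn : 4 ≤ n)
include p

theorem b1_mul_e (m : ℕ) : b1 * e m = if m = n - 1 then b1 else 0 := by
  by_cases h : m = n - 1
  · rw [h, p.hb1.2, if_pos rfl]
  · rw [if_neg h]
    conv_lhs => rw [← p.hb1.2, mul_assoc]
    rw [p.toPreC.e_mul_e, if_neg fun hh => h hh.symm, mul_zero]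

theorem b2_mul_e (m : ℕ) : b2 * e m = if m = n then b2 else 0 := by
  by_cases h : m = n
  · rw [h, p.hb2.2, if_pos rfl]
  · rw [if_neg h]
    conv_lhs => rw [← p.hb2.2, mul_assoc]
    rw [p.toPreC.e_mul_e, if_neg fun hh => h hh.symm, mul_zero]

theorem e_mul_b1 (m : ℕ) : e m * b1 = if m = 1 then b1 else 0 := by
  conv_lhs => rw [← p.hb1.1, ← mul_assoc]
  rw [p.toPreC.e_mul_e]
  split
  · next h => subst h; rw [p.hb1.1]
  · next h => rw [zero_mul]

theorem e_mul_b2 (m : ℕ) : e m * b2 = if m = 1 then b2 else 0 := by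
  conv_lhs => rw [← p.hb2.1, ← mul_assoc]
  rw [p.toPreC.e_mul_e]
  split
  · next h => subst h; rw [p.hb2.1]
  · next h => rw [zero_mul]

theorem r1X (X : R) : b1 * (α (n - 2) * X) = b2 * (α (n - 1) * X) := by
  rw [← mul_assoc, ← mul_assoc, p.r1]

theorem r2X {i : ℕ} (h1 : 1 ≤ i) (h2 : i ≤ n - 3) (X : R) :
    ap e α 1 i * (b2 * (α (n - 1) * (ap e α i (n - 2 - i) * X))) = 0 := by
  have := congrArg (· * X) (p.r2 i h1 h2)
  simpa only [mul_assoc, zero_mul] using this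

theorem r3X (X : R) : α (n - 1) * (ap e α 1 (n - 3) * (b1 * X)) = 0 := by
  have := congrArg (· * X) p.r3
  simpa only [mul_assoc, zero_mul] using this

theorem r4X (X : R) : α (n - 2) * (ap e α 1 (n - 3) * (b2 * X)) = 0 := by
  have := congrArg (· * X) p.r4
  simpa only [mul_assoc, zero_mul] using this

include hn

omit p in
theorem pth_one_top1 : pth n e α 1 (n - 1) = α (n - 2) * ap e α 1 (n - 3) := by
  rw [pth_eq_top1 e α hn (by omega), show n - 2 - 1 = n - 3 from by omega]

omit p in
theorem pth_one_top2 : pth n e α 1 n = α (n - 1) * ap e α 1 (n - 3) := by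
  rw [pth_eq_top2 e α hn (by omega), show n - 2 - 1 = n - 3 from by omega]

theorem res_mul_e {l : ℕ} (h1 : 1 ≤ l) (h2 : l ≤ n) (m : ℕ) :
    res n e α b1 b2 l * e m = if m = l then res n e α b1 b2 l else 0 := by
  unfold res
  by_cases hl : l ≤ n - 2
  · rw [if_pos hl, mul_assoc, mul_assoc, p.toPreC.ap_mul_e]
    split
    · rfl
    · rw [mul_zero, mul_zero]
  · rw [if_neg hl]
    by_cases hl' : l = n - 1
    · rw [if_pos hl', p.b1_mul_e, hl']
    · have : l = n := by omega
      rw [if_neg hl', p.b2_mul_e, this]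

/-- the key vanishing: composing a path `1 → j` with the completion tail of `l`
is zero whenever `j` does not reach `l`. -/
theorem vanish {j l : ℕ} (hj1 : 1 ≤ j) (hj2 : j ≤ n) (hl1 : 1 ≤ l) (hl2 : l ≤ n)
    (h : ¬ reach n j l) : pth n e α 1 j * res n e α b1 b2 l = 0 := by
  have hd := p.toPreC
  by_cases hl : l ≤ n - 2
  · have hres : res n e α b1 b2 l = b2 * (α (n - 1) * ap e α l (n - 2 - l)) := by
      unfold res; rw [if_pos hl]
    rw [hres]
    by_cases hjle : j ≤ n - 2
    · -- j > l
      have hjl : l < j := by unfold reach at h; omega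
      have hsplit : ap e α (1 + l) (j - 1 - l) * ap e α 1 l = ap e α 1 (j - 1) := by
        rw [hd.ap_mul_ap hn (by omega) (by omega), if_pos rfl]
        congr 1
        omega
      rw [pth_eq_ap e α hjle, ← hsplit, mul_assoc, p.r2 l (by omega) (by omega), mul_zero]
    · rcases (by unfold reach at h; omega : j = n - 1 ∨ j = n) with hj | hj
      · rw [hj, pth_one_top1 hn, mul_assoc, p.r4X]
      · rw [hj, pth_one_top2 hn, mul_assoc, ← p.r1X, p.r3X]
  · by_cases hl' : l = n - 1
    · have hjn : j = n := by unfold reach at h; omega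
      have hres : res n e α b1 b2 l = b1 := by unfold res; rw [if_neg hl, if_pos hl']
      rw [hres, hjn, pth_one_top2 hn, mul_assoc, p.r3]
    · have hjn : j = n - 1 := by unfold reach at h; omega
      have hres : res n e α b1 b2 l = b2 := by unfold res; rw [if_neg hl, if_neg hl']
      rw [hres, hjn, pth_one_top1 hn, mul_assoc, p.r4]

theorem e_mul_cmpl {k l : ℕ} (hk1 : 1 ≤ k) (hk2 : k ≤ n) (m : ℕ) :
    e m * cmpl n e α b1 b2 k l = if m = k then cmpl n e α b1 b2 k l else 0 := by
  have h1k : reach n 1 k := by unfold reach; omega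
  unfold cmpl
  rw [← mul_assoc, p.toPreC.e_mul_pth hn h1k]
  split
  · rfl
  · rw [zero_mul]

theorem cmpl_mul_e {k l : ℕ} (hl1 : 1 ≤ l) (hl2 : l ≤ n) (m : ℕ) :
    cmpl n e α b1 b2 k l * e m = if m = l then cmpl n e α b1 b2 k l else 0 := by
  unfold cmpl
  rw [mul_assoc, p.res_mul_e hn hl1 hl2]
  split
  · rfl
  · rw [mul_zero]

/-- composing the completion tail of `j` with the path `i → j` gives the tail of `i`. -/
theorem res_mul_pth {i j : ℕ} (h1 : reach n i j) :
    res n e α b1 b2 j * pth n e α i j = res n e α b1 b2 i := by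
  have hd := p.toPreC
  have hi1 : 1 ≤ i := h1.1
  by_cases hj : j ≤ n - 2
  · have hij : i ≤ j := by rcases h1 with ⟨_, h' | h'⟩ <;> omega
    have e1 : res n e α b1 b2 j = b2 * (α (n - 1) * ap e α j (n - 2 - j)) := by
      unfold res; rw [if_pos hj]
    have e2 : res n e α b1 b2 i = b2 * (α (n - 1) * ap e α i (n - 2 - i)) := by
      unfold res; rw [if_pos (by omega)]
    rw [e1, e2, pth_eq_ap e α hj, mul_assoc, mul_assoc,
      hd.ap_mul_ap hn hi1 (by omega), if_pos (by omega)]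
    congr 3
    omega
  · by_cases hj' : j = n - 1
    · have e1 : res n e α b1 b2 j = b1 := by unfold res; rw [if_neg hj, if_pos hj']
      rw [e1, hj']
      by_cases hi : i ≤ n - 2
      · have e2 : res n e α b1 b2 i = b2 * (α (n - 1) * ap e α i (n - 2 - i)) := by
          unfold res; rw [if_pos hi]
        rw [e2, pth_eq_top1 e α hn hi, p.r1X]
      · have hii : i = n - 1 := by
          subst hj'; rcases h1 with ⟨_, h' | h'⟩ <;> omega
        have e2 : res n e α b1 b2 i = b1 := by
          unfold res; rw [if_neg (by omega), if_pos hii]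
        rw [e2, hii, pth_eq_e1 e α hn, p.b1_mul_e, if_pos rfl]
    · have hjn : j = n := by rcases h1 with ⟨_, h' | h'⟩ <;> omega
      have e1 : res n e α b1 b2 j = b2 := by unfold res; rw [if_neg hj, if_neg hj']
      rw [e1, hjn]
      by_cases hi : i ≤ n - 2
      · have e2 : res n e α b1 b2 i = b2 * (α (n - 1) * ap e α i (n - 2 - i)) := by
          unfold res; rw [if_pos hi]
        rw [e2, pth_eq_top2 e α hn hi]
      · have hii : i = n := by subst hjn; rcases h1 with ⟨_, h' | h'⟩ <;> omega
        have e2 : res n e α b1 b2 i = b2 := by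
          unfold res; rw [if_neg (by omega), if_neg (by omega)]
        rw [e2, hii, pth_eq_e2 e α hn, p.b2_mul_e, if_pos rfl]

/-- P1: path times complement. -/
theorem pth_mul_cmpl {i j k l : ℕ} (h1 : reach n i j) (h2 : reach n k l) :
    pth n e α i j * cmpl n e α b1 b2 k l =
      if k = i ∧ reach n j l then cmpl n e α b1 b2 j l else 0 := by
  have hd := p.toPreC
  have hk1 : 1 ≤ k := h2.1
  have hkn : k ≤ n := by rcases h2 with ⟨_, h' | h'⟩ <;> omega
  have hjn : j ≤ n := by rcases h1 with ⟨_, h' | h'⟩ <;> omega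
  have hj1 : 1 ≤ j := by rcases h1 with ⟨h', h'' | h''⟩ <;> omega
  have hl1 : 1 ≤ l := by rcases h2 with ⟨h', h'' | h''⟩ <;> omega
  have hln : l ≤ n := by rcases h2 with ⟨_, h' | h'⟩ <;> omega
  by_cases hk : k = i
  · subst hk
    have h1k : reach n 1 k := by unfold reach; unfold reach at h1; omega
    unfold cmpl
    rw [← mul_assoc, hd.pth_mul hn h1k h1, if_pos rfl]
    by_cases hr : reach n j l
    · rw [if_pos ⟨rfl, hr⟩]
    · rw [if_neg (fun hh => hr hh.2), p.vanish hn hj1 hjn hl1 hln hr]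
  · rw [if_neg (fun hh => hk hh.1)]
    have hc : cmpl n e α b1 b2 k l = e k * cmpl n e α b1 b2 k l := by
      rw [p.e_mul_cmpl hn hk1 hkn, if_pos rfl]
    rw [hc, ← mul_assoc, hd.pth_mul_e hn h1 k, if_neg hk, zero_mul]

/-- P2: complement times path. -/
theorem cmpl_mul_pth {i j k l : ℕ} (h1 : reach n i j) (h2 : reach n k l) :
    cmpl n e α b1 b2 k l * pth n e α i j =
      if l = j ∧ reach n k i then cmpl n e α b1 b2 k i else 0 := by
  have hd := p.toPreC
  have hk1 : 1 ≤ k := h2.1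
  have hkn : k ≤ n := by rcases h2 with ⟨_, h' | h'⟩ <;> omega
  have hi1 : 1 ≤ i := h1.1
  have hin : i ≤ n := by rcases h1 with ⟨_, h' | h'⟩ <;> omega
  have hl1 : 1 ≤ l := by rcases h2 with ⟨h', h'' | h''⟩ <;> omega
  have hln : l ≤ n := by rcases h2 with ⟨_, h' | h'⟩ <;> omega
  by_cases hlj : l = j
  · subst hlj
    show pth n e α 1 k * res n e α b1 b2 l * pth n e α i l = _
    rw [mul_assoc, p.res_mul_pth hn h1]
    by_cases hr : reach n k i
    · rw [if_pos ⟨rfl, hr⟩]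
      rfl
    · rw [if_neg (fun hh => hr hh.2), p.vanish hn hk1 hkn hi1 hin hr]
  · rw [if_neg (fun hh => hlj hh.1)]
    have hc : pth n e α i j = e j * pth n e α i j := by
      rw [hd.e_mul_pth hn h1 j, if_pos rfl]
    rw [hc]
    show pth n e α 1 k * res n e α b1 b2 l * (e j * pth n e α i j) = 0
    rw [mul_assoc, ← mul_assoc (res n e α b1 b2 l), p.res_mul_e hn hl1 hln,
      if_neg (fun hh => hlj hh.symm), zero_mul, mul_zero]

theorem res_one_mul_res {j : ℕ} (hj1 : 1 ≤ j) (hj2 : j ≤ n) :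
    res n e α b1 b2 1 * res n e α b1 b2 j = 0 := by
  have e0 : res n e α b1 b2 1 = b2 * (α (n - 1) * ap e α 1 (n - 3)) := by
    unfold res
    rw [if_pos (by omega), show n - 2 - 1 = n - 3 from by omega]
  rw [e0]
  by_cases hj : j ≤ n - 2
  · have e1 : res n e α b1 b2 j = b2 * (α (n - 1) * ap e α j (n - 2 - j)) := by
      unfold res; rw [if_pos hj]
    rw [e1]
    simp only [mul_assoc]
    rw [← p.r1X (ap e α j (n - 2 - j)), p.r3X (α (n - 2) * ap e α j (n - 2 - j)), mul_zero]
  · by_cases hj' : j = n - 1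
    · have e1 : res n e α b1 b2 j = b1 := by unfold res; rw [if_neg hj, if_pos hj']
      rw [e1]
      simp only [mul_assoc]
      rw [p.r3, mul_zero]
    · have e1 : res n e α b1 b2 j = b2 := by unfold res; rw [if_neg hj, if_neg hj']
      rw [e1, ← p.r1X (ap e α 1 (n - 3))]
      simp only [mul_assoc]
      rw [p.r4, mul_zero]

/-- P3: complements multiply to zero. -/
theorem cmpl_mul_cmpl {i j k l : ℕ} (h1 : reach n i j) (h2 : reach n k l) :
    cmpl n e α b1 b2 k l * cmpl n e α b1 b2 i j = 0 := by
  have hd := p.toPreC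
  have hi1 : 1 ≤ i := h1.1
  have hin : i ≤ n := by rcases h1 with ⟨_, h' | h'⟩ <;> omega
  have hj1 : 1 ≤ j := by rcases h1 with ⟨h', h'' | h''⟩ <;> omega
  have hjn : j ≤ n := by rcases h1 with ⟨_, h' | h'⟩ <;> omega
  have hl1 : 1 ≤ l := by rcases h2 with ⟨h', h'' | h''⟩ <;> omega
  have hln : l ≤ n := by rcases h2 with ⟨_, h' | h'⟩ <;> omega
  have h1i : reach n 1 i := by unfold reach; omega
  show cmpl n e α b1 b2 k l * (pth n e α 1 i * res n e α b1 b2 j) = 0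
  rw [← mul_assoc, p.cmpl_mul_pth hn h1i h2]
  split
  · show pth n e α 1 k * res n e α b1 b2 1 * res n e α b1 b2 j = 0
    rw [mul_assoc, p.res_one_mul_res hn hj1 hjn, mul_zero]
  · rw [zero_mul]

end PreP

end S9x

namespace S9x

variable {R S : Type} [Ring R] [Ring S]

theorem map_chainProd (f : R →+* S) (α : ℕ → R) (i : ℕ) :
    ∀ m, f (chainProd α i m) = chainProd (fun k => f (α k)) i m
  | 0 => f.map_one
  | m + 1 => by
    show f (α (i + m) * chainProd α i m) = _
    rw [f.map_mul, map_chainProd f α i m]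
    rfl

theorem map_ap (f : R →+* S) (e α : ℕ → R) (i m : ℕ) :
    f (ap e α i m) = ap (fun k => f (e k)) (fun k => f (α k)) i m := by
  unfold ap
  rw [f.map_mul, map_chainProd]

theorem map_pth (f : R →+* S) (n : ℕ) (e α : ℕ → R) (i j : ℕ) :
    f (pth n e α i j) = pth n (fun k => f (e k)) (fun k => f (α k)) i j := by
  unfold pth
  split
  · rw [map_ap]
  · split
    · split
      · rfl
      · rw [f.map_mul, map_ap]
    · split
      · rfl
      · rw [f.map_mul, map_ap]

theorem map_res (f : R →+* S) (n : ℕ) (e α : ℕ → R) (b1 b2 : R) (l : ℕ) :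
    f (res n e α b1 b2 l) = res n (fun k => f (e k)) (fun k => f (α k)) (f b1) (f b2) l := by
  unfold res
  split
  · rw [f.map_mul, f.map_mul, map_ap]
  · split <;> rfl

theorem map_cmpl (f : R →+* S) (n : ℕ) (e α : ℕ → R) (b1 b2 : R) (k l : ℕ) :
    f (cmpl n e α b1 b2 k l)
      = cmpl n (fun k => f (e k)) (fun k => f (α k)) (f b1) (f b2) k l := by
  unfold cmpl
  rw [f.map_mul, map_pth, map_res]

theorem PreC.map {n : ℕ} {e α : ℕ → R} (d : PreC n e α) (f : R →+* S) :
    PreC n (fun k => f (e k)) (fun k => f (α k)) where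
  hε0 i h := by rw [d.hε0 i h, f.map_zero]
  ha0 i h := by rw [d.ha0 i h, f.map_zero]
  hidem i := by rw [← f.map_mul, d.hidem]
  horth i j h := by rw [← f.map_mul, d.horth i j h, f.map_zero]
  hsum := by rw [← map_sum, d.hsum, f.map_one]
  hcomp i h1 h2 := by
    constructor
    · rw [← f.map_mul, (d.hcomp i h1 h2).1]
    · rw [← f.map_mul, (d.hcomp i h1 h2).2]
  hcomp2 := by
    constructor
    · rw [← f.map_mul, d.hcomp2.1]
    · rw [← f.map_mul, d.hcomp2.2]
  hcomp3 := by
    constructor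
    · rw [← f.map_mul, d.hcomp3.1]
    · rw [← f.map_mul, d.hcomp3.2]

theorem reach_src_tgt {n i : ℕ} (hn : 4 ≤ n) (h1 : 1 ≤ i) (h2 : i ≤ n - 1) :
    reach n (src n i) (tgt n i) := by
  unfold reach src tgt
  split <;> omega

/-- the paths span the path algebra, given that the generators generate. -/
theorem span_pth_top (K : Type) [Field K] {C : Type} [Ring C] [Algebra K C]
    {n : ℕ} {e α : ℕ → C} (d : PreC n e α) (hn : 4 ≤ n)
    (hadj : Algebra.adjoin K (Set.range e ∪ Set.range α) = ⊤) :
    Submodule.span K (Set.range fun q : ↥(pairs n) => pth n e α q.1.1 q.1.2) = ⊤ := by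
  set s : Set C := Set.range fun q : ↥(pairs n) => pth n e α q.1.1 q.1.2 with hs
  have hmem : ∀ i j, reach n i j → pth n e α i j ∈ s := by
    intro i j hij
    exact ⟨⟨(i, j), (mem_pairs hn).2 hij⟩, rfl⟩
  have hemem : ∀ i, e i ∈ Submodule.span K s := by
    intro i
    by_cases h : 1 ≤ i ∧ i ≤ n
    · rw [← d.pth_self hn h.1 h.2]
      exact Submodule.subset_span (hmem i i (reach_self hn h.1 h.2))
    · rw [d.hε0 i h]; exact Submodule.zero_mem _
  have hamem : ∀ i, α i ∈ Submodule.span K s := by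
    intro i
    by_cases h : 1 ≤ i ∧ i ≤ n - 1
    · rw [← d.pth_arrow hn h.1 h.2]
      exact Submodule.subset_span (hmem _ _ (reach_src_tgt hn h.1 h.2))
    · rw [d.ha0 i h]; exact Submodule.zero_mem _
  have hone : (1 : C) ∈ Submodule.span K s := by
    rw [← d.hsum]
    exact Submodule.sum_mem _ fun i hi => by
      rw [Finset.mem_Icc] at hi
      exact hemem i
  have hmul : ∀ x ∈ Submodule.span K s, ∀ y ∈ Submodule.span K s,
      x * y ∈ Submodule.span K s := by
    have hle : Submodule.span K s * Submodule.span K s ≤ Submodule.span K s := by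
      rw [Submodule.span_mul_span]
      apply Submodule.span_le.2
      rintro c ⟨x, hx, y, hy, rfl⟩
      rcases hx with ⟨⟨⟨px, py⟩, hp⟩, rfl⟩
      rcases hy with ⟨⟨⟨qx, qy⟩, hq⟩, rfl⟩
      have hp' := (mem_pairs hn).1 hp
      have hq' := (mem_pairs hn).1 hq
      show pth n e α px py * pth n e α qx qy ∈ _
      rw [d.pth_mul hn hq' hp']
      split
      · next h =>
        subst h
        exact Submodule.subset_span (hmem _ _ (reach_trans hn hq' hp'))
      · exact Submodule.zero_mem _
    exact fun x hx y hy => Submodule.mul_le.1 hle x hx y hy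
  set SA : Subalgebra K C :=
    { carrier := Submodule.span K s
      mul_mem' := fun {x y} hx hy => hmul x hx y hy
      one_mem' := hone
      add_mem' := fun {x y} hx hy => Submodule.add_mem _ hx hy
      zero_mem' := Submodule.zero_mem _
      algebraMap_mem' := fun r => by
        rw [Algebra.algebraMap_eq_smul_one]
        exact Submodule.smul_mem _ r hone } with hSA
  have hle : Algebra.adjoin K (Set.range e ∪ Set.range α) ≤ SA := by
    apply Algebra.adjoin_le
    rintro c (⟨i, rfl⟩ | ⟨i, rfl⟩)
    · exact hemem i
    · exact hamem i
  rw [hadj] at hle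
  rw [eq_top_iff]
  exact fun x _ => hle (Algebra.mem_top)

end S9x

namespace S9x

open Matrix

def vtx (n : ℕ) (hpos : 0 < n) (i : ℕ) : Fin n := ⟨(i - 1) % n, Nat.mod_lt _ hpos⟩

theorem vtx_val {n : ℕ} (hpos : 0 < n) {i : ℕ} (h1 : 1 ≤ i) (h2 : i ≤ n) :
    (vtx n hpos i).val = i - 1 := Nat.mod_eq_of_lt (by omega)

theorem vtx_inj {n : ℕ} (hpos : 0 < n) {i j : ℕ} (h1 : 1 ≤ i) (h2 : i ≤ n)
    (h1' : 1 ≤ j) (h2' : j ≤ n) : vtx n hpos i = vtx n hpos j ↔ i = j := by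
  rw [Fin.ext_iff, vtx_val hpos h1 h2, vtx_val hpos h1' h2']
  omega

variable (K : Type) [Field K]

def εM (n : ℕ) (hpos : 0 < n) (i : ℕ) : Matrix (Fin n) (Fin n) K :=
  if 1 ≤ i ∧ i ≤ n then Matrix.single (vtx n hpos i) (vtx n hpos i) 1 else 0

def aM (n : ℕ) (hpos : 0 < n) (i : ℕ) : Matrix (Fin n) (Fin n) K :=
  if 1 ≤ i ∧ i ≤ n - 1 then
    Matrix.single (vtx n hpos (tgt n i)) (vtx n hpos (src n i)) 1 else 0

variable {n : ℕ} (hn : 4 ≤ n)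

theorem aM_eq (hpos : 0 < n) {i : ℕ} (h1 : 1 ≤ i) (h2 : i ≤ n - 1) :
    aM K n hpos i = Matrix.single (vtx n hpos (tgt n i)) (vtx n hpos (src n i)) 1 := by
  unfold aM; rw [if_pos ⟨h1, h2⟩]

theorem εM_eq (hpos : 0 < n) {i : ℕ} (h1 : 1 ≤ i) (h2 : i ≤ n) :
    εM K n hpos i = Matrix.single (vtx n hpos i) (vtx n hpos i) 1 := by
  unfold εM; rw [if_pos ⟨h1, h2⟩]

include hn

theorem ap_succ' {R : Type} [Ring R] (e α : ℕ → R) (i m : ℕ) :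
    ap e α i (m + 1) = α (i + m) * ap e α i m := by
  show (α (i + m) * chainProd α i m) * e i = α (i + m) * (chainProd α i m * e i)
  rw [mul_assoc]

theorem preC_M (hpos : 0 < n) : PreC n (εM K n hpos) (aM K n hpos) where
  hε0 i h := by unfold εM; rw [if_neg h]
  ha0 i h := by unfold aM; rw [if_neg h]
  hidem i := by
    unfold εM
    split
    · rw [Matrix.single_mul_single_same, one_mul]
    · rw [mul_zero]
  horth i j hij := by
    unfold εM
    split
    · split
      · next h1 h2 =>
        rw [Matrix.single_mul_single_of_ne]
        rw [Ne, vtx_inj hpos h1.1 h1.2 h2.1 h2.2]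
        exact hij
      · rw [mul_zero]
    · rw [zero_mul]
  hsum := by
    ext x y
    rw [Matrix.sum_apply]
    rw [Finset.sum_eq_single (x.val + 1)]
    · rw [εM_eq K hpos (by omega) (by omega)]
      have hv : vtx n hpos (x.val + 1) = x := by
        apply Fin.ext
        rw [vtx_val hpos (by omega) (by omega)]
        omega
      rw [hv]
      by_cases hxy : x = y
      · subst hxy
        rw [Matrix.single_apply_same, Matrix.one_apply_eq]
      · rw [Matrix.single_apply_of_ne x x 1 x y (fun h => hxy h.2), Matrix.one_apply_ne hxy]
    · intro i hi hix
      rw [Finset.mem_Icc] at hi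
      rw [εM_eq K hpos hi.1 hi.2]
      apply Matrix.single_apply_of_ne
      rintro ⟨h1, -⟩
      apply hix
      have := congrArg Fin.val h1
      rw [vtx_val hpos hi.1 hi.2] at this
      omega
    · intro hx
      exfalso
      apply hx
      rw [Finset.mem_Icc]
      omega
  hcomp i h1 h2 := by
    have ht : tgt n i = i + 1 := by unfold tgt; rw [if_neg (by omega)]
    have hs : src n i = i := by unfold src; rw [if_neg (by omega)]
    rw [aM_eq K hpos h1 (by omega), εM_eq K hpos (by omega) (by omega),
      εM_eq K hpos (by omega) (by omega), ht, hs]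
    constructor
    · rw [Matrix.single_mul_single_same, one_mul]
    · rw [Matrix.single_mul_single_same, mul_one]
  hcomp2 := by
    have ht : tgt n (n - 2) = n - 1 := by unfold tgt; rw [if_neg (by omega)]; omega
    have hs : src n (n - 2) = n - 2 := by unfold src; rw [if_neg (by omega)]
    rw [aM_eq K hpos (by omega) (by omega), εM_eq K hpos (by omega) (by omega),
      εM_eq K hpos (by omega) (by omega), ht, hs]
    constructor
    · rw [Matrix.single_mul_single_same, one_mul]
    · rw [Matrix.single_mul_single_same, mul_one]
  hcomp3 := by
    have ht : tgt n (n - 1) = n := by unfold tgt; rw [if_pos rfl]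
    have hs : src n (n - 1) = n - 2 := by unfold src; rw [if_pos rfl]
    rw [aM_eq K hpos (by omega) (by omega), εM_eq K hpos (by omega) (by omega),
      εM_eq K hpos (by omega) (by omega), ht, hs]
    constructor
    · rw [Matrix.single_mul_single_same, one_mul]
    · rw [Matrix.single_mul_single_same, mul_one]

theorem ap_M (hpos : 0 < n) {i : ℕ} (h1 : 1 ≤ i) :
    ∀ {m : ℕ}, i + m ≤ n - 2 →
      ap (εM K n hpos) (aM K n hpos) i m = Matrix.single (vtx n hpos (i + m)) (vtx n hpos i) 1
  | 0, h => by
    show 1 * εM K n hpos i = _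
    rw [one_mul, εM_eq K hpos h1 (by omega), Nat.add_zero]
  | m + 1, h => by
    rw [ap_succ' hn]
    rw [ap_M hpos h1 (by omega : i + m ≤ n - 2), aM_eq K hpos (by omega) (by omega)]
    have ht : tgt n (i + m) = i + m + 1 := by unfold tgt; rw [if_neg (by omega)]
    have hs : src n (i + m) = i + m := by unfold src; rw [if_neg (by omega)]
    rw [ht, hs, Matrix.single_mul_single_same, one_mul]
    rfl

theorem pth_M (hpos : 0 < n) {i j : ℕ} (hij : reach n i j) :
    pth n (εM K n hpos) (aM K n hpos) i j
      = Matrix.single (vtx n hpos j) (vtx n hpos i) 1 := by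
  have hi1 : 1 ≤ i := hij.1
  by_cases hj : j ≤ n - 2
  · have hijle : i ≤ j := by rcases hij with ⟨_, h' | h'⟩ <;> omega
    rw [pth_eq_ap _ _ hj, ap_M K hn hpos hi1 (by omega : i + (j - i) ≤ n - 2),
      show i + (j - i) = j from by omega]
  · have hile : i ≤ n - 2 ∨ i = j := by rcases hij with ⟨_, h' | h'⟩ <;> omega
    rcases (by rcases hij with ⟨_, h' | h'⟩ <;> omega : j = n - 1 ∨ j = n) with hj' | hj'
    · rw [hj'] at hile ⊢
      rcases hile with hile | hile
      · rw [pth_eq_top1 _ _ hn hile, ap_M K hn hpos hi1 (by omega : i + (n - 2 - i) ≤ n - 2),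
          aM_eq K hpos (by omega) (by omega)]
        have ht : tgt n (n - 2) = n - 1 := by unfold tgt; rw [if_neg (by omega)]; omega
        have hs : src n (n - 2) = n - 2 := by unfold src; rw [if_neg (by omega)]
        rw [ht, hs, show i + (n - 2 - i) = n - 2 from by omega, Matrix.single_mul_single_same,
          one_mul]
      · rw [hile, pth_eq_e1 _ _ hn, εM_eq K hpos (by omega) (by omega)]
    · rw [hj'] at hile ⊢
      rcases hile with hile | hile
      · rw [pth_eq_top2 _ _ hn hile, ap_M K hn hpos hi1 (by omega : i + (n - 2 - i) ≤ n - 2),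
          aM_eq K hpos (by omega) (by omega)]
        have ht : tgt n (n - 1) = n := by unfold tgt; rw [if_pos rfl]
        have hs : src n (n - 1) = n - 2 := by unfold src; rw [if_pos rfl]
        rw [ht, hs, show i + (n - 2 - i) = n - 2 from by omega, Matrix.single_mul_single_same,
          one_mul]
      · rw [hile, pth_eq_e2 _ _ hn, εM_eq K hpos (by omega) (by omega)]

end S9x

namespace S9x

theorem sum_sum_collapse {M : Type} [AddCommMonoid M] (s t : Finset ℕ) {j : ℕ}
    (hj : j ∈ s) (F : ℕ → ℕ → M)
    (h0 : ∀ x ∈ s, x ≠ j → ∀ y ∈ t, F x y = 0) :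
    (∑ x ∈ s, ∑ y ∈ t, F x y) = ∑ y ∈ t, F j y := by
  rw [Finset.sum_eq_single_of_mem j hj]
  intro x hx hxj
  exact Finset.sum_eq_zero (h0 x hx hxj)

end S9x

set_option maxHeartbeats 2000000

/-- Let `K` be a field and `n ≥ 4`.  Let `B` be the trivial extension
algebra `T(KΓ)` of the path algebra `C` of the `D_n` quiver `Γ` with vertices `1, …, n`,
arrows `a_i : i → i+1` for `1 ≤ i ≤ n−3`, `a_{n−2} : n−2 → n−1` and `a_{n−1} : n−2 → n`.
Then `B` is isomorphic to `KQ/I`, where `Q` is the quiver with vertices `1, …, n` and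
arrows `α_i : i → i+1` for `1 ≤ i ≤ n−3`, `γ_{n−1} : n−2 → n−1`, `γ_n : n−2 → n`,
`β_{n−1} : n−1 → 1`, `β_n : n → 1`, and `I` is the two-sided ideal generated by:
`β_{n−1}γ_{n−1} − β_nγ_n`; the cycles `α_i⋯α_1 β_n γ_n α_{n−3}⋯α_i` for all
`1 ≤ i ≤ n−3`; `γ_n α_{n−3}⋯α_1 β_{n−1}`; and `γ_{n−1} α_{n−3}⋯α_1 β_n`
(paths composed right-to-left).

Here `C` and `P = KQ/I` are pinned down by their universal properties as presented
algebras, and `E ≅ C ⊕ C^∨` is the trivial extension `T(C)`, recorded by a `K`-linear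
equivalence `ι` transporting the multiplication
`(x,f)·(y,g) = (xy, xg + fy)` with `(xg)(b) = g(bx)` and `(fy)(b) = f(yb)`. -/
theorem statement9 (K : Type) [Field K] (n : ℕ) (hn : 4 ≤ n)
    -- the path algebra C of the D_n quiver: idempotents ε i, arrows a i
    (C : Type) [Ring C] [Algebra K C] (ε : ℕ → C) (a : ℕ → C)
    (hε0 : ∀ i, ¬ (1 ≤ i ∧ i ≤ n) → ε i = 0)
    (ha0 : ∀ i, ¬ (1 ≤ i ∧ i ≤ n - 1) → a i = 0)
    (hidem : ∀ i, ε i * ε i = ε i)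
    (horth : ∀ i j, i ≠ j → ε i * ε j = 0)
    (hsum : ∑ i ∈ Finset.Icc 1 n, ε i = 1)
    (hcomp : ∀ i, 1 ≤ i → i ≤ n - 3 → ε (i + 1) * a i = a i ∧ a i * ε i = a i)
    (hcomp2 : ε (n - 1) * a (n - 2) = a (n - 2) ∧ a (n - 2) * ε (n - 2) = a (n - 2))
    (hcomp3 : ε n * a (n - 1) = a (n - 1) ∧ a (n - 1) * ε (n - 2) = a (n - 1))
    (hfree : ∀ (S : Type) [Ring S] [Algebra K S] (ε' : ℕ → S) (a' : ℕ → S),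
      (∀ i, ¬ (1 ≤ i ∧ i ≤ n) → ε' i = 0) →
      (∀ i, ¬ (1 ≤ i ∧ i ≤ n - 1) → a' i = 0) →
      (∀ i, ε' i * ε' i = ε' i) →
      (∀ i j, i ≠ j → ε' i * ε' j = 0) →
      (∑ i ∈ Finset.Icc 1 n, ε' i = 1) →
      (∀ i, 1 ≤ i → i ≤ n - 3 → ε' (i + 1) * a' i = a' i ∧ a' i * ε' i = a' i) →
      (ε' (n - 1) * a' (n - 2) = a' (n - 2) ∧ a' (n - 2) * ε' (n - 2) = a' (n - 2)) →
      (ε' n * a' (n - 1) = a' (n - 1) ∧ a' (n - 1) * ε' (n - 2) = a' (n - 1)) →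
      ∃! f : C →ₐ[K] S, (∀ i, f (ε i) = ε' i) ∧ (∀ i, f (a i) = a' i))
    -- the trivial extension E = T(C)
    (E : Type) [Ring E] [Algebra K E] (ι : E ≃ₗ[K] C × (C →ₗ[K] K))
    (hone : ι 1 = (1, 0))
    (hmul : ∀ u v : E, ι (u * v) =
      ((ι u).1 * (ι v).1,
        ((ι v).2).comp (LinearMap.mulRight K (ι u).1) +
          ((ι u).2).comp (LinearMap.mulLeft K (ι v).1)))
    -- the algebra P = KQ/I: idempotents κ i, arrows αq i (1 ≤ i ≤ n−3),
    -- γ1 = γ_{n−1}, γ2 = γ_n, b1 = β_{n−1}, b2 = β_n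
    (P : Type) [Ring P] [Algebra K P] (κ : ℕ → P) (αq : ℕ → P) (γ1 γ2 b1 b2 : P)
    (hκ0 : ∀ i, ¬ (1 ≤ i ∧ i ≤ n) → κ i = 0)
    (hαq0 : ∀ i, ¬ (1 ≤ i ∧ i ≤ n - 3) → αq i = 0)
    (hκidem : ∀ i, κ i * κ i = κ i)
    (hκorth : ∀ i j, i ≠ j → κ i * κ j = 0)
    (hκsum : ∑ i ∈ Finset.Icc 1 n, κ i = 1)
    (hαcomp : ∀ i, 1 ≤ i → i ≤ n - 3 → κ (i + 1) * αq i = αq i ∧ αq i * κ i = αq i)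
    (hγ1comp : κ (n - 1) * γ1 = γ1 ∧ γ1 * κ (n - 2) = γ1)
    (hγ2comp : κ n * γ2 = γ2 ∧ γ2 * κ (n - 2) = γ2)
    (hb1comp : κ 1 * b1 = b1 ∧ b1 * κ (n - 1) = b1)
    (hb2comp : κ 1 * b2 = b2 ∧ b2 * κ n = b2)
    (hrel1 : b1 * γ1 - b2 * γ2 = 0)
    (hrel2 : ∀ i, 1 ≤ i → i ≤ n - 3 →
      chainProd αq 1 i * b2 * γ2 * chainProd αq i (n - 2 - i) = 0)
    (hrel3 : γ2 * chainProd αq 1 (n - 3) * b1 = 0)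
    (hrel4 : γ1 * chainProd αq 1 (n - 3) * b2 = 0)
    (hPfree : ∀ (S : Type) [Ring S] [Algebra K S]
      (κ' : ℕ → S) (αq' : ℕ → S) (γ1' γ2' b1' b2' : S),
      (∀ i, ¬ (1 ≤ i ∧ i ≤ n) → κ' i = 0) →
      (∀ i, ¬ (1 ≤ i ∧ i ≤ n - 3) → αq' i = 0) →
      (∀ i, κ' i * κ' i = κ' i) →
      (∀ i j, i ≠ j → κ' i * κ' j = 0) →
      (∑ i ∈ Finset.Icc 1 n, κ' i = 1) →
      (∀ i, 1 ≤ i → i ≤ n - 3 → κ' (i + 1) * αq' i = αq' i ∧ αq' i * κ' i = αq' i) →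
      (κ' (n - 1) * γ1' = γ1' ∧ γ1' * κ' (n - 2) = γ1') →
      (κ' n * γ2' = γ2' ∧ γ2' * κ' (n - 2) = γ2') →
      (κ' 1 * b1' = b1' ∧ b1' * κ' (n - 1) = b1') →
      (κ' 1 * b2' = b2' ∧ b2' * κ' n = b2') →
      (b1' * γ1' - b2' * γ2' = 0) →
      (∀ i, 1 ≤ i → i ≤ n - 3 →
        chainProd αq' 1 i * b2' * γ2' * chainProd αq' i (n - 2 - i) = 0) →
      (γ2' * chainProd αq' 1 (n - 3) * b1' = 0) →
      (γ1' * chainProd αq' 1 (n - 3) * b2' = 0) →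
      ∃! f : P →ₐ[K] S, (∀ i, f (κ i) = κ' i) ∧ (∀ i, f (αq i) = αq' i) ∧
        f γ1 = γ1' ∧ f γ2 = γ2' ∧ f b1 = b1' ∧ f b2 = b2') :
    Nonempty (E ≃ₐ[K] P) := by
  classical
  have hpos : 0 < n := by omega
  -- the C-side generator bundle
  have dC : S9x.PreC n ε a := ⟨hε0, ha0, hidem, horth, hsum, hcomp, hcomp2, hcomp3⟩
  -- the P-side arrow family
  set aP : ℕ → P := fun i => if i = n - 2 then γ1 else if i = n - 1 then γ2 else αq i
    with haPdef
  have haP2 : aP (n - 2) = γ1 := if_pos rfl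
  have haP3 : aP (n - 1) = γ2 := by
    show (if n - 1 = n - 2 then γ1 else if n - 1 = n - 1 then γ2 else αq (n - 1)) = γ2
    rw [if_neg (by omega), if_pos rfl]
  have haPlt : ∀ i, i ≤ n - 3 → aP i = αq i := by
    intro i hi
    show (if i = n - 2 then γ1 else if i = n - 1 then γ2 else αq i) = αq i
    rw [if_neg (by omega), if_neg (by omega)]
  have dP : S9x.PreC n κ aP := by
    refine ⟨hκ0, ?_, hκidem, hκorth, hκsum, ?_, ?_, ?_⟩
    · intro i h
      rcases Nat.lt_or_ge i 1 with h' | h'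
      · rw [haPlt i (by omega)]; exact hαq0 i (by omega)
      · show (if i = n - 2 then γ1 else if i = n - 1 then γ2 else αq i) = 0
        rw [if_neg (by omega), if_neg (by omega)]
        exact hαq0 i (by omega)
    · intro i h1 h2
      rw [haPlt i h2]; exact hαcomp i h1 h2
    · rw [haP2]; exact hγ1comp
    · rw [haP3]; exact hγ2comp
  -- chains in P only involve the low arrows
  have hchainP : ∀ i m, i + m ≤ n - 2 → chainProd aP i m = chainProd αq i m := by
    intro i m h
    exact S9x.chainProd_congr fun k hk => haPlt (i + k) (by omega)
  have pP : S9x.PreP n κ aP b1 b2 := by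
    refine ⟨dP, hb1comp, hb2comp, ?_, ?_, ?_, ?_⟩
    · rw [haP2, haP3]; exact sub_eq_zero.1 hrel1
    · intro i h1 h2
      have e1 : S9x.ap κ aP 1 i = chainProd αq 1 i * κ 1 := by
        unfold S9x.ap; rw [hchainP 1 i (by omega)]
      have e2 : S9x.ap κ aP i (n - 2 - i) = chainProd αq i (n - 2 - i) * κ i := by
        unfold S9x.ap; rw [hchainP i (n - 2 - i) (by omega)]
      rw [e1, e2, haP3]
      have h0 := congrArg (· * κ i) (hrel2 i h1 h2)
      simp only [mul_assoc, zero_mul] at h0 ⊢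
      rw [← mul_assoc (κ 1) b2, hb2comp.1]
      exact h0
    · have e1 : S9x.ap κ aP 1 (n - 3) = chainProd αq 1 (n - 3) * κ 1 := by
        unfold S9x.ap; rw [hchainP 1 (n - 3) (by omega)]
      rw [e1, haP3]
      have h0 := hrel3
      simp only [mul_assoc] at h0 ⊢
      rw [hb1comp.1]
      exact h0
    · have e1 : S9x.ap κ aP 1 (n - 3) = chainProd αq 1 (n - 3) * κ 1 := by
        unfold S9x.ap; rw [hchainP 1 (n - 3) (by omega)]
      rw [e1, haP2]
      have h0 := hrel4
      simp only [mul_assoc] at h0 ⊢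
      rw [hb2comp.1]
      exact h0
  -- C is generated by its generators
  have hadjC : Algebra.adjoin K (Set.range ε ∪ Set.range a) = ⊤ := by
    set A := Algebra.adjoin K (Set.range ε ∪ Set.range a) with hA
    have hεA : ∀ i, ε i ∈ A := fun i => Algebra.subset_adjoin (Or.inl ⟨i, rfl⟩)
    have haA : ∀ i, a i ∈ A := fun i => Algebra.subset_adjoin (Or.inr ⟨i, rfl⟩)
    obtain ⟨f, ⟨hfε, hfa⟩, -⟩ :=
      hfree A (fun i => ⟨ε i, hεA i⟩) (fun i => ⟨a i, haA i⟩)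
        (fun i h => Subtype.ext (hε0 i h)) (fun i h => Subtype.ext (ha0 i h))
        (fun i => Subtype.ext (hidem i)) (fun i j h => Subtype.ext (horth i j h))
        (by
          apply Subtype.ext
          push_cast
          exact hsum)
        (fun i h1 h2 => ⟨Subtype.ext (hcomp i h1 h2).1, Subtype.ext (hcomp i h1 h2).2⟩)
        ⟨Subtype.ext hcomp2.1, Subtype.ext hcomp2.2⟩
        ⟨Subtype.ext hcomp3.1, Subtype.ext hcomp3.2⟩
    obtain ⟨g0, -, hguniq⟩ := hfree C ε a hε0 ha0 hidem horth hsum hcomp hcomp2 hcomp3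
    have h1 : A.val.comp f = g0 :=
      hguniq _ ⟨fun i => by simp [hfε i], fun i => by simp [hfa i]⟩
    have h2 : AlgHom.id K C = g0 := hguniq _ ⟨fun i => rfl, fun i => rfl⟩
    rw [eq_top_iff]
    intro c _
    have hc : A.val (f c) = c := by
      have := DFunLike.congr_fun (h1.trans h2.symm) c
      simpa using this
    exact hc ▸ (f c).2
  -- the matrix representation and the basis of paths
  have dM := S9x.preC_M K hn hpos
  obtain ⟨ρ, ⟨hρε, hρa⟩, -⟩ :=
    hfree (Matrix (Fin n) (Fin n) K) (S9x.εM K n hpos) (S9x.aM K n hpos)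
      dM.hε0 dM.ha0 dM.hidem dM.horth dM.hsum dM.hcomp dM.hcomp2 dM.hcomp3
  have hρpth : ∀ i j, ρ (S9x.pth n ε a i j)
      = S9x.pth n (S9x.εM K n hpos) (S9x.aM K n hpos) i j := by
    intro i j
    have eA : (fun k => ρ.toRingHom (ε k)) = S9x.εM K n hpos := by
      funext k; simpa using hρε k
    have eB : (fun k => ρ.toRingHom (a k)) = S9x.aM K n hpos := by
      funext k; simpa using hρa k
    have := S9x.map_pth ρ.toRingHom n ε a i j
    rw [eA, eB] at this
    simpa using this
  have hindep : LinearIndependent K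
      (fun q : ↥(S9x.pairs n) => S9x.pth n ε a q.1.1 q.1.2) := by
    apply LinearIndependent.of_comp ρ.toLinearMap
    have hfe : (⇑ρ.toLinearMap ∘ fun q : ↥(S9x.pairs n) => S9x.pth n ε a q.1.1 q.1.2)
        = (⇑(Matrix.stdBasis K (Fin n) (Fin n)) ∘
            fun q : ↥(S9x.pairs n) => (S9x.vtx n hpos q.1.2, S9x.vtx n hpos q.1.1)) := by
      funext q
      show ρ (S9x.pth n ε a q.1.1 q.1.2) = _
      rw [hρpth, S9x.pth_M K hn hpos ((S9x.mem_pairs hn).1 q.2)]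
      exact (Matrix.stdBasis_eq_single K _ _).symm
    rw [hfe]
    apply (Matrix.stdBasis K (Fin n) (Fin n)).linearIndependent.comp
    intro q q' hqq
    have hq := (S9x.mem_pairs hn).1 q.2
    have hq' := (S9x.mem_pairs hn).1 q'.2
    have hb : 1 ≤ q.1.1 ∧ q.1.1 ≤ n ∧ 1 ≤ q.1.2 ∧ q.1.2 ≤ n := by
      unfold S9x.reach at hq; omega
    have hb' : 1 ≤ q'.1.1 ∧ q'.1.1 ≤ n ∧ 1 ≤ q'.1.2 ∧ q'.1.2 ≤ n := by
      unfold S9x.reach at hq'; omega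
    have h1 := congrArg Prod.fst hqq
    have h2 := congrArg Prod.snd hqq
    simp only at h1 h2
    rw [S9x.vtx_inj hpos hb.2.2.1 hb.2.2.2 hb'.2.2.1 hb'.2.2.2] at h1
    rw [S9x.vtx_inj hpos hb.1 hb.2.1 hb'.1 hb'.2.1] at h2
    exact Subtype.ext (Prod.ext h2 h1)
  have hspan := S9x.span_pth_top K dC hn hadjC
  set B : Module.Basis ↥(S9x.pairs n) K C := Module.Basis.mk hindep (le_of_eq hspan.symm) with hBdef
  have hBeq : ∀ p q (h : S9x.reach n p q),
      S9x.pth n ε a p q = B ⟨(p, q), (S9x.mem_pairs hn).2 h⟩ := by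
    intro p q h
    rw [hBdef, Module.Basis.mk_apply]
  have hcoord : ∀ (i0 j0 : ℕ) (h0 : S9x.reach n i0 j0) (p q : ℕ), S9x.reach n p q →
      B.coord ⟨(i0, j0), (S9x.mem_pairs hn).2 h0⟩ (S9x.pth n ε a p q)
        = if p = i0 ∧ q = j0 then 1 else 0 := by
    intro i0 j0 h0 p q h
    rw [hBeq p q h, Module.Basis.coord_apply, Module.Basis.repr_self, Finsupp.single_apply]
    by_cases hh : p = i0 ∧ q = j0
    · rw [if_pos hh, if_pos (Subtype.ext (Prod.ext hh.1 hh.2))]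
    · rw [if_neg hh, if_neg]
      intro hc
      apply hh
      have := Subtype.ext_iff.1 hc
      rw [Prod.ext_iff] at this
      exact this
  have hB' : ∀ q : ↥(S9x.pairs n), B q = S9x.pth n ε a q.1.1 q.1.2 := by
    intro q
    rw [hBdef, Module.Basis.mk_apply]
  -- extensionality for functionals via the basis of paths
  have hext : ∀ (h h' : C →ₗ[K] K),
      (∀ p q, S9x.reach n p q → h (S9x.pth n ε a p q) = h' (S9x.pth n ε a p q)) →
      h = h' := by
    intro h h' hh
    apply B.ext
    intro q
    rw [hB' q]
    exact hh q.1.1 q.1.2 ((S9x.mem_pairs hn).1 q.2)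
  -- E-side multiplication helpers
  have hmulE : ∀ (x : C) (f : C →ₗ[K] K) (y : C) (g : C →ₗ[K] K),
      (ι.symm (x, f) : E) * ι.symm (y, g)
        = ι.symm (x * y,
            g.comp (LinearMap.mulRight K x) + f.comp (LinearMap.mulLeft K y)) := by
    intro x f y g
    apply ι.injective
    rw [hmul, LinearEquiv.apply_symm_apply, LinearEquiv.apply_symm_apply,
      LinearEquiv.apply_symm_apply]
  have hone' : (ι.symm (1, 0) : E) = 1 := by rw [← hone, LinearEquiv.symm_apply_apply]
  have heCmul : ∀ x y : C, (ι.symm (x * y, (0 : C →ₗ[K] K)) : E)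
      = ι.symm (x, 0) * ι.symm (y, 0) := by
    intro x y
    rw [hmulE x 0 y 0, LinearMap.zero_comp, LinearMap.zero_comp, add_zero]
  set eC : C →ₐ[K] E := AlgHom.ofLinearMap
    (ι.symm.toLinearMap.comp (LinearMap.inl K C (C →ₗ[K] K))) hone'
    (fun x y => heCmul x y) with heCdef
  have heCx : ∀ x : C, eC x = ι.symm (x, 0) := fun _ => rfl
  have hXF : ∀ (x : C) (h : C →ₗ[K] K),
      eC x * ι.symm (0, h) = ι.symm (0, h.comp (LinearMap.mulRight K x)) := by
    intro x h
    rw [heCx, hmulE x 0 0 h, mul_zero, LinearMap.zero_comp, add_zero]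
  have hFX : ∀ (y : C) (h : C →ₗ[K] K),
      (ι.symm ((0 : C), h) : E) * eC y = ι.symm (0, h.comp (LinearMap.mulLeft K y)) := by
    intro y h
    rw [heCx, hmulE 0 h y 0, zero_mul, LinearMap.zero_comp, zero_add]
  have hmr0 : LinearMap.mulRight K (0 : C) = 0 := by ext c; simp
  have hml0 : LinearMap.mulLeft K (0 : C) = 0 := by ext c; simp
  have hFF : ∀ (h h' : C →ₗ[K] K), (ι.symm ((0 : C), h) : E) * ι.symm ((0 : C), h') = 0 := by
    intro h h'
    rw [hmulE 0 h 0 h', mul_zero, hmr0, hml0, LinearMap.comp_zero, LinearMap.comp_zero,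
      add_zero]
    show (ι.symm 0 : E) = 0
    rw [map_zero]
  -- the generators of P inside E
  have hreach1n1 : S9x.reach n 1 (n - 1) := by unfold S9x.reach; omega
  have hreach1n : S9x.reach n 1 n := by unfold S9x.reach; omega
  set c1 : C →ₗ[K] K := B.coord ⟨(1, n - 1), (S9x.mem_pairs hn).2 hreach1n1⟩ with hc1def
  set c2 : C →ₗ[K] K := B.coord ⟨(1, n), (S9x.mem_pairs hn).2 hreach1n⟩ with hc2def
  have hc1 : ∀ p q, S9x.reach n p q →
      c1 (S9x.pth n ε a p q) = if p = 1 ∧ q = n - 1 then 1 else 0 :=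
    fun p q h => hcoord 1 (n - 1) hreach1n1 p q h
  have hc2 : ∀ p q, S9x.reach n p q →
      c2 (S9x.pth n ε a p q) = if p = 1 ∧ q = n then 1 else 0 :=
    fun p q h => hcoord 1 n hreach1n p q h
  set κ' : ℕ → E := fun i => eC (ε i) with hκ'def
  set αq' : ℕ → E := fun i => if 1 ≤ i ∧ i ≤ n - 3 then eC (a i) else 0 with hαq'def
  set b1' : E := ι.symm (0, c1) with hb1'def
  set b2' : E := ι.symm (0, c2) with hb2'def
  -- arrows as paths
  have hpan2 : S9x.pth n ε a (n - 2) (n - 1) = a (n - 2) := by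
    have h := dC.pth_arrow hn (i := n - 2) (by omega) (by omega)
    rwa [show S9x.tgt n (n - 2) = n - 1 from by
        unfold S9x.tgt; rw [if_neg (by omega)]; omega,
      show S9x.src n (n - 2) = n - 2 from by unfold S9x.src; rw [if_neg (by omega)]] at h
  have hpan1 : S9x.pth n ε a (n - 2) n = a (n - 1) := by
    have h := dC.pth_arrow hn (i := n - 1) (by omega) (by omega)
    rwa [show S9x.tgt n (n - 1) = n from by unfold S9x.tgt; rw [if_pos rfl],
      show S9x.src n (n - 1) = n - 2 from by unfold S9x.src; rw [if_pos rfl]] at h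
  -- chains in E
  have hchE : ∀ i m, 1 ≤ i → i + m ≤ n - 2 → chainProd αq' i m = eC (chainProd a i m) := by
    intro i m h1 h2
    have e1 : chainProd αq' i m = chainProd (fun k => eC.toRingHom (a k)) i m := by
      apply S9x.chainProd_congr
      intro k hk
      show αq' (i + k) = _
      rw [hαq'def]
      simp only
      rw [if_pos ⟨by omega, by omega⟩]
      rfl
    rw [e1, ← S9x.map_chainProd eC.toRingHom a i m]
    rfl
  -- chains as paths
  have hchpth : ∀ m, 1 ≤ m → m + 1 ≤ n - 2 →
      chainProd a 1 m = S9x.pth n ε a 1 (m + 1) := by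
    intro m h1 h2
    rw [S9x.pth_eq_ap ε a (by omega : m + 1 ≤ n - 2),
      show m + 1 - 1 = m from by omega]
    exact dC.chain_eq_ap hn (by omega) h1 (by omega)
  have hchap : ∀ i, 1 ≤ i → i + 1 ≤ n - 2 →
      chainProd a i (n - 2 - i) = S9x.pth n ε a i (n - 2) := by
    intro i h1 h2
    rw [S9x.pth_eq_ap ε a (le_refl (n - 2))]
    exact dC.chain_eq_ap hn h1 (by omega) (by omega)
  -- the relations of KQ/I hold in E
  have hEκ0 : ∀ i, ¬ (1 ≤ i ∧ i ≤ n) → κ' i = 0 := by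
    intro i h
    simp only [hκ'def]
    rw [hε0 i h, map_zero]
  have hEα0 : ∀ i, ¬ (1 ≤ i ∧ i ≤ n - 3) → αq' i = 0 := by
    intro i h
    simp only [hαq'def, if_neg h]
  have hEidem : ∀ i, κ' i * κ' i = κ' i := by
    intro i; simp only [hκ'def]; rw [← map_mul, hidem]
  have hEorth : ∀ i j, i ≠ j → κ' i * κ' j = 0 := by
    intro i j h; simp only [hκ'def]; rw [← map_mul, horth i j h, map_zero]
  have hEsum : ∑ i ∈ Finset.Icc 1 n, κ' i = 1 := by
    simp only [hκ'def]; rw [← map_sum, hsum, map_one]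
  have hEαcomp : ∀ i, 1 ≤ i → i ≤ n - 3 →
      κ' (i + 1) * αq' i = αq' i ∧ αq' i * κ' i = αq' i := by
    intro i h1 h2
    simp only [hκ'def, hαq'def, if_pos (⟨h1, h2⟩ : 1 ≤ i ∧ i ≤ n - 3)]
    exact ⟨by rw [← map_mul, (hcomp i h1 h2).1], by rw [← map_mul, (hcomp i h1 h2).2]⟩
  have hEγ1 : κ' (n - 1) * eC (a (n - 2)) = eC (a (n - 2)) ∧
      eC (a (n - 2)) * κ' (n - 2) = eC (a (n - 2)) := by
    simp only [hκ'def]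
    exact ⟨by rw [← map_mul, hcomp2.1], by rw [← map_mul, hcomp2.2]⟩
  have hEγ2 : κ' n * eC (a (n - 1)) = eC (a (n - 1)) ∧
      eC (a (n - 1)) * κ' (n - 2) = eC (a (n - 1)) := by
    simp only [hκ'def]
    exact ⟨by rw [← map_mul, hcomp3.1], by rw [← map_mul, hcomp3.2]⟩
  have hEb1 : κ' 1 * b1' = b1' ∧ b1' * κ' (n - 1) = b1' := by
    constructor
    · simp only [hκ'def]
      rw [hb1'def, hXF (ε 1) c1]
      have hfe : c1.comp (LinearMap.mulRight K (ε 1)) = c1 := by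
        apply hext
        intro p q h
        show c1 (S9x.pth n ε a p q * ε 1) = c1 (S9x.pth n ε a p q)
        rw [dC.pth_mul_e hn h 1]
        by_cases hp : 1 = p
        · rw [if_pos hp]
        · rw [if_neg hp, map_zero, hc1 p q h, if_neg (fun hh => hp hh.1.symm)]
      rw [hfe]
    · simp only [hκ'def]
      rw [hb1'def, hFX (ε (n - 1)) c1]
      have hfe : c1.comp (LinearMap.mulLeft K (ε (n - 1))) = c1 := by
        apply hext
        intro p q h
        show c1 (ε (n - 1) * S9x.pth n ε a p q) = c1 (S9x.pth n ε a p q)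
        rw [dC.e_mul_pth hn h (n - 1)]
        by_cases hq : n - 1 = q
        · rw [if_pos hq]
        · rw [if_neg hq, map_zero, hc1 p q h, if_neg (fun hh => hq hh.2.symm)]
      rw [hfe]
  have hEb2 : κ' 1 * b2' = b2' ∧ b2' * κ' n = b2' := by
    constructor
    · simp only [hκ'def]
      rw [hb2'def, hXF (ε 1) c2]
      have hfe : c2.comp (LinearMap.mulRight K (ε 1)) = c2 := by
        apply hext
        intro p q h
        show c2 (S9x.pth n ε a p q * ε 1) = c2 (S9x.pth n ε a p q)
        rw [dC.pth_mul_e hn h 1]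
        by_cases hp : 1 = p
        · rw [if_pos hp]
        · rw [if_neg hp, map_zero, hc2 p q h, if_neg (fun hh => hp hh.1.symm)]
      rw [hfe]
    · simp only [hκ'def]
      rw [hb2'def, hFX (ε n) c2]
      have hfe : c2.comp (LinearMap.mulLeft K (ε n)) = c2 := by
        apply hext
        intro p q h
        show c2 (ε n * S9x.pth n ε a p q) = c2 (S9x.pth n ε a p q)
        rw [dC.e_mul_pth hn h n]
        by_cases hq : n = q
        · rw [if_pos hq]
        · rw [if_neg hq, map_zero, hc2 p q h, if_neg (fun hh => hq hh.2.symm)]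
      rw [hfe]
  have hreachn2n1 : S9x.reach n (n - 2) (n - 1) := by unfold S9x.reach; omega
  have hreachn2n : S9x.reach n (n - 2) n := by unfold S9x.reach; omega
  have hErel1 : b1' * eC (a (n - 2)) - b2' * eC (a (n - 1)) = 0 := by
    rw [hb1'def, hb2'def, hFX (a (n - 2)) c1, hFX (a (n - 1)) c2, sub_eq_zero]
    have hfe : c1.comp (LinearMap.mulLeft K (a (n - 2)))
        = c2.comp (LinearMap.mulLeft K (a (n - 1))) := by
      apply hext
      intro p q h
      show c1 (a (n - 2) * S9x.pth n ε a p q) = c2 (a (n - 1) * S9x.pth n ε a p q)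
      rw [← hpan2, ← hpan1, dC.pth_mul hn h hreachn2n1, dC.pth_mul hn h hreachn2n]
      by_cases hq : q = n - 2
      · rw [if_pos hq, if_pos hq]
        have hp2 : S9x.reach n p (n - 1) := by unfold S9x.reach at h ⊢; omega
        have hp3 : S9x.reach n p n := by unfold S9x.reach at h ⊢; omega
        rw [hc1 p (n - 1) hp2, hc2 p n hp3]
        by_cases hp : p = 1
        · rw [if_pos ⟨hp, rfl⟩, if_pos ⟨hp, rfl⟩]
        · rw [if_neg (fun hh => hp hh.1), if_neg (fun hh => hp hh.1)]
      · rw [if_neg hq, if_neg hq, map_zero, map_zero]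
    rw [hfe]
  have hErel2 : ∀ i, 1 ≤ i → i ≤ n - 3 →
      chainProd αq' 1 i * b2' * eC (a (n - 1)) * chainProd αq' i (n - 2 - i) = 0 := by
    intro i h1 h2
    rw [hchE 1 i (by omega) (by omega), hchE i (n - 2 - i) h1 (by omega),
      hchpth i h1 (by omega), hchap i h1 (by omega)]
    rw [hb2'def, hXF (S9x.pth n ε a 1 (i + 1)) c2,
      hFX (a (n - 1)) _, hFX (S9x.pth n ε a i (n - 2)) _]
    have hri : S9x.reach n i (n - 2) := by unfold S9x.reach; omega
    have hr1i : S9x.reach n 1 (i + 1) := by unfold S9x.reach; omega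
    have hfe : (((c2.comp (LinearMap.mulRight K (S9x.pth n ε a 1 (i + 1)))).comp
        (LinearMap.mulLeft K (a (n - 1)))).comp
        (LinearMap.mulLeft K (S9x.pth n ε a i (n - 2)))) = 0 := by
      apply hext _ 0
      intro p q h
      show c2 ((a (n - 1) * (S9x.pth n ε a i (n - 2) * S9x.pth n ε a p q))
          * S9x.pth n ε a 1 (i + 1)) = (0 : C →ₗ[K] K) (S9x.pth n ε a p q)
      rw [LinearMap.zero_apply, dC.pth_mul hn h hri]
      by_cases hq : q = i
      · rw [if_pos hq]
        have hpn2 : S9x.reach n p (n - 2) := by unfold S9x.reach at h ⊢; omega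
        rw [← hpan1, dC.pth_mul hn hpn2 hreachn2n, if_pos rfl]
        have hpn : S9x.reach n p n := by unfold S9x.reach at hpn2 ⊢; omega
        rw [dC.pth_mul hn hr1i hpn]
        have : ¬ (i + 1 = p) := by
          intro hh
          unfold S9x.reach at h
          omega
        rw [if_neg this, map_zero]
      · rw [if_neg hq, mul_zero, zero_mul, map_zero]
    rw [hfe]
    show (ι.symm 0 : E) = 0
    rw [map_zero]
  have harith32 : n - 3 + 1 = n - 2 := by omega
  have hErel3 : eC (a (n - 1)) * chainProd αq' 1 (n - 3) * b1' = 0 := by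
    rw [hchE 1 (n - 3) (by omega) (by omega), hchpth (n - 3) (by omega) (by omega), harith32]
    rw [← map_mul, ← hpan1, dC.pth_mul hn (by unfold S9x.reach; omega : S9x.reach n 1 (n - 2))
      hreachn2n, if_pos rfl]
    rw [hb1'def, hXF (S9x.pth n ε a 1 n) c1]
    have hfe : c1.comp (LinearMap.mulRight K (S9x.pth n ε a 1 n)) = 0 := by
      apply hext _ 0
      intro p q h
      show c1 (S9x.pth n ε a p q * S9x.pth n ε a 1 n) = (0 : C →ₗ[K] K) (S9x.pth n ε a p q)
      rw [LinearMap.zero_apply, dC.pth_mul hn hreach1n h]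
      by_cases hp : n = p
      · rw [if_pos hp]
        have hq : q = n := by unfold S9x.reach at h; omega
        rw [hq, hc1 1 n hreach1n, if_neg (by omega)]
      · rw [if_neg hp, map_zero]
    rw [hfe]
    show (ι.symm 0 : E) = 0
    rw [map_zero]
  have hErel4 : eC (a (n - 2)) * chainProd αq' 1 (n - 3) * b2' = 0 := by
    rw [hchE 1 (n - 3) (by omega) (by omega), hchpth (n - 3) (by omega) (by omega), harith32]
    rw [← map_mul, ← hpan2, dC.pth_mul hn (by unfold S9x.reach; omega : S9x.reach n 1 (n - 2))
      hreachn2n1, if_pos rfl]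
    rw [hb2'def, hXF (S9x.pth n ε a 1 (n - 1)) c2]
    have hfe : c2.comp (LinearMap.mulRight K (S9x.pth n ε a 1 (n - 1))) = 0 := by
      apply hext _ 0
      intro p q h
      show c2 (S9x.pth n ε a p q * S9x.pth n ε a 1 (n - 1))
          = (0 : C →ₗ[K] K) (S9x.pth n ε a p q)
      rw [LinearMap.zero_apply, dC.pth_mul hn hreach1n1 h]
      by_cases hp : n - 1 = p
      · rw [if_pos hp]
        have hq : q = n - 1 := by unfold S9x.reach at h; omega
        rw [hq, hc2 1 (n - 1) hreach1n1, if_neg (by omega)]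
      · rw [if_neg hp, map_zero]
    rw [hfe]
    show (ι.symm 0 : E) = 0
    rw [map_zero]
  obtain ⟨f, ⟨hfκ, hfα, hfγ1, hfγ2, hfb1, hfb2⟩, -⟩ :=
    hPfree E κ' αq' (eC (a (n - 2))) (eC (a (n - 1))) b1' b2' hEκ0 hEα0 hEidem hEorth
      hEsum hEαcomp hEγ1 hEγ2 hEb1 hEb2 hErel1 hErel2 hErel3 hErel4
  -- the algebra map C → P
  obtain ⟨φ, ⟨hφε, hφa⟩, -⟩ :=
    hfree P κ aP dP.hε0 dP.ha0 dP.hidem dP.horth dP.hsum dP.hcomp dP.hcomp2 dP.hcomp3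
  have hφpth : ∀ i j, φ (S9x.pth n ε a i j) = S9x.pth n κ aP i j := by
    intro i j
    have eA : (fun k => φ.toRingHom (ε k)) = κ := by funext k; simpa using hφε k
    have eB : (fun k => φ.toRingHom (a k)) = aP := by funext k; simpa using hφa k
    have h := S9x.map_pth φ.toRingHom n ε a i j
    rw [eA, eB] at h
    simpa using h
  -- the bimodule map C^∨ → P
  set Dm : (C →ₗ[K] K) →ₗ[K] P :=
    { toFun := fun h => ∑ x ∈ Finset.Icc 1 n, ∑ y ∈ Finset.Icc 1 n,
        if S9x.reach n x y then h (S9x.pth n ε a x y) • S9x.cmpl n κ aP b1 b2 x y else 0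
      map_add' := by
        intro h h'
        rw [← Finset.sum_add_distrib]
        refine Finset.sum_congr rfl fun x _ => ?_
        rw [← Finset.sum_add_distrib]
        refine Finset.sum_congr rfl fun y _ => ?_
        split
        · rw [LinearMap.add_apply, add_smul]
        · rw [add_zero]
      map_smul' := by
        intro k h
        simp only [RingHom.id_apply, LinearMap.smul_apply, Finset.smul_sum, smul_ite,
          smul_zero, smul_assoc] } with hDmdef
  have hDm : ∀ h : C →ₗ[K] K, Dm h = ∑ x ∈ Finset.Icc 1 n, ∑ y ∈ Finset.Icc 1 n,
      if S9x.reach n x y then h (S9x.pth n ε a x y) • S9x.cmpl n κ aP b1 b2 x y else 0 :=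
    fun h => rfl
  have hmemIcc : ∀ {p q : ℕ}, S9x.reach n p q → p ∈ Finset.Icc 1 n ∧ q ∈ Finset.Icc 1 n := by
    intro p q h
    rw [Finset.mem_Icc, Finset.mem_Icc]
    unfold S9x.reach at h
    omega
  have hDcoord : ∀ p q (h : S9x.reach n p q),
      Dm (B.coord ⟨(p, q), (S9x.mem_pairs hn).2 h⟩) = S9x.cmpl n κ aP b1 b2 p q := by
    intro p q h
    rw [hDm]
    rw [S9x.sum_sum_collapse _ _ (hmemIcc h).1]
    · rw [Finset.sum_eq_single_of_mem q (hmemIcc h).2]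
      · rw [if_pos h, hcoord p q h p q h, if_pos ⟨rfl, rfl⟩, one_smul]
      · intro y _ hy
        split
        · next hr =>
          rw [hcoord p q h p y hr, if_neg (fun hh => hy hh.2), zero_smul]
        · rfl
    · intro x _ hx y _
      split
      · next hr =>
        rw [hcoord p q h x y hr, if_neg (fun hh => hx hh.1), zero_smul]
      · rfl
  -- L3 : products of complements vanish
  have hL3 : ∀ h h' : C →ₗ[K] K, Dm h * Dm h' = 0 := by
    intro h h'
    rw [hDm h, Finset.sum_mul]
    refine Finset.sum_eq_zero fun x _ => ?_
    rw [Finset.sum_mul]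
    refine Finset.sum_eq_zero fun y _ => ?_
    split
    · next hxy =>
      rw [smul_mul_assoc]
      have hz : S9x.cmpl n κ aP b1 b2 x y * Dm h' = 0 := by
        rw [hDm h', Finset.mul_sum]
        refine Finset.sum_eq_zero fun x' _ => ?_
        rw [Finset.mul_sum]
        refine Finset.sum_eq_zero fun y' _ => ?_
        split
        · next hxy' =>
          rw [mul_smul_comm, pP.cmpl_mul_cmpl hn hxy' hxy, smul_zero]
        · rw [mul_zero]
      rw [hz, smul_zero]
    · rw [zero_mul]
  -- L1
  have hL1 : ∀ (x : C) (h : C →ₗ[K] K),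
      Dm (h.comp (LinearMap.mulRight K x)) = φ x * Dm h := by
    intro x h
    have hx : x ∈ Submodule.span K
        (Set.range fun q : ↥(S9x.pairs n) => S9x.pth n ε a q.1.1 q.1.2) := by
      rw [hspan]; trivial
    induction hx using Submodule.span_induction with
    | mem x hx =>
      rcases hx with ⟨qq, rfl⟩
      obtain ⟨⟨i, j⟩, hq⟩ := qq
      have hij : S9x.reach n i j := (S9x.mem_pairs hn).1 hq
      show Dm (h.comp (LinearMap.mulRight K (S9x.pth n ε a i j)))
          = φ (S9x.pth n ε a i j) * Dm h
      rw [hφpth, hDm, hDm, Finset.mul_sum]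
      have lhs_eq : (∑ x' ∈ Finset.Icc 1 n, ∑ y' ∈ Finset.Icc 1 n,
          if S9x.reach n x' y' then (h.comp (LinearMap.mulRight K (S9x.pth n ε a i j)))
            (S9x.pth n ε a x' y') • S9x.cmpl n κ aP b1 b2 x' y' else 0)
          = ∑ y' ∈ Finset.Icc 1 n,
            if S9x.reach n j y' then h (S9x.pth n ε a i y') • S9x.cmpl n κ aP b1 b2 j y'
            else 0 := by
        rw [S9x.sum_sum_collapse _ _ (hmemIcc (S9x.reach_trans hn hij
          (S9x.reach_self hn (by unfold S9x.reach at hij; omega)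
            (by unfold S9x.reach at hij; omega)))).2]
        · refine Finset.sum_congr rfl fun y' _ => ?_
          by_cases hr : S9x.reach n j y'
          · rw [if_pos hr, if_pos hr]
            have he : (h.comp (LinearMap.mulRight K (S9x.pth n ε a i j)))
                (S9x.pth n ε a j y') = h (S9x.pth n ε a i y') := by
              show h (S9x.pth n ε a j y' * S9x.pth n ε a i j) = _
              rw [dC.pth_mul hn hij hr, if_pos rfl]
            rw [he]
          · rw [if_neg hr, if_neg hr]
        · intro x' _ hx' y' _
          by_cases hr : S9x.reach n x' y'
          · rw [if_pos hr]
            have he : (h.comp (LinearMap.mulRight K (S9x.pth n ε a i j)))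
                (S9x.pth n ε a x' y') = 0 := by
              show h (S9x.pth n ε a x' y' * S9x.pth n ε a i j) = 0
              rw [dC.pth_mul hn hij hr, if_neg (fun hh => hx' hh.symm), map_zero]
            rw [he, zero_smul]
          · rw [if_neg hr]
      rw [lhs_eq]
      have rhs_eq : (∑ x' ∈ Finset.Icc 1 n, S9x.pth n κ aP i j *
          ∑ y' ∈ Finset.Icc 1 n,
            if S9x.reach n x' y' then h (S9x.pth n ε a x' y') •
              S9x.cmpl n κ aP b1 b2 x' y' else 0)
          = ∑ y' ∈ Finset.Icc 1 n,
            if S9x.reach n j y' then h (S9x.pth n ε a i y') • S9x.cmpl n κ aP b1 b2 j y'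
            else 0 := by
        have step : ∀ x' ∈ Finset.Icc 1 n, S9x.pth n κ aP i j *
            (∑ y' ∈ Finset.Icc 1 n,
              if S9x.reach n x' y' then h (S9x.pth n ε a x' y') •
                S9x.cmpl n κ aP b1 b2 x' y' else 0)
            = ∑ y' ∈ Finset.Icc 1 n,
              if S9x.reach n x' y' then h (S9x.pth n ε a x' y') •
                (if x' = i ∧ S9x.reach n j y' then S9x.cmpl n κ aP b1 b2 j y' else 0)
              else 0 := by
          intro x' _
          rw [Finset.mul_sum]
          refine Finset.sum_congr rfl fun y' _ => ?_
          by_cases hr : S9x.reach n x' y'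
          · rw [if_pos hr, if_pos hr, mul_smul_comm, pP.pth_mul_cmpl hn hij hr]
          · rw [if_neg hr, if_neg hr, mul_zero]
        rw [Finset.sum_congr rfl step]
        rw [S9x.sum_sum_collapse _ _ (hmemIcc hij).1]
        · refine Finset.sum_congr rfl fun y' _ => ?_
          by_cases hrj : S9x.reach n j y'
          · have hri : S9x.reach n i y' := S9x.reach_trans hn hij hrj
            rw [if_pos hri, if_pos ⟨rfl, hrj⟩, if_pos hrj]
          · by_cases hri : S9x.reach n i y'
            · rw [if_pos hri, if_neg (fun hh => hrj hh.2), smul_zero, if_neg hrj]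
            · rw [if_neg hri, if_neg hrj]
        · intro x' _ hx' y' _
          by_cases hr : S9x.reach n x' y'
          · rw [if_pos hr, if_neg (fun hh => hx' hh.1), smul_zero]
          · rw [if_neg hr]
      rw [rhs_eq]
    | zero =>
      rw [hmr0, LinearMap.comp_zero, map_zero, map_zero, zero_mul]
    | add u v hu hv ihu ihv =>
      have he : LinearMap.mulRight K (u + v)
          = LinearMap.mulRight K u + LinearMap.mulRight K v := by
        ext c; simp [mul_add]
      rw [he, LinearMap.comp_add, map_add, ihu, ihv, map_add, add_mul]
    | smul k u hu ih =>
      have he : LinearMap.mulRight K (k • u) = k • LinearMap.mulRight K u := by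
        ext c; simp [mul_smul_comm]
      have he2 : h.comp (k • LinearMap.mulRight K u) = k • h.comp (LinearMap.mulRight K u) := by
        ext c; simp
      rw [he, he2, map_smul, ih, map_smul, smul_mul_assoc]
  -- L2
  have hL2 : ∀ (y : C) (h : C →ₗ[K] K),
      Dm (h.comp (LinearMap.mulLeft K y)) = Dm h * φ y := by
    intro y h
    have hy : y ∈ Submodule.span K
        (Set.range fun q : ↥(S9x.pairs n) => S9x.pth n ε a q.1.1 q.1.2) := by
      rw [hspan]; trivial
    induction hy using Submodule.span_induction with
    | mem y hy =>
      rcases hy with ⟨qq, rfl⟩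
      obtain ⟨⟨i, j⟩, hq⟩ := qq
      have hij : S9x.reach n i j := (S9x.mem_pairs hn).1 hq
      show Dm (h.comp (LinearMap.mulLeft K (S9x.pth n ε a i j)))
          = Dm h * φ (S9x.pth n ε a i j)
      rw [hφpth, hDm, hDm, Finset.sum_mul]
      have lhs_eq : (∑ x' ∈ Finset.Icc 1 n, ∑ y' ∈ Finset.Icc 1 n,
          if S9x.reach n x' y' then (h.comp (LinearMap.mulLeft K (S9x.pth n ε a i j)))
            (S9x.pth n ε a x' y') • S9x.cmpl n κ aP b1 b2 x' y' else 0)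
          = ∑ x' ∈ Finset.Icc 1 n,
            if S9x.reach n x' i then h (S9x.pth n ε a x' j) • S9x.cmpl n κ aP b1 b2 x' i
            else 0 := by
        refine Finset.sum_congr rfl fun x' _ => ?_
        rw [Finset.sum_eq_single_of_mem i (hmemIcc hij).1]
        · by_cases hr : S9x.reach n x' i
          · rw [if_pos hr, if_pos hr]
            have he : (h.comp (LinearMap.mulLeft K (S9x.pth n ε a i j)))
                (S9x.pth n ε a x' i) = h (S9x.pth n ε a x' j) := by
              show h (S9x.pth n ε a i j * S9x.pth n ε a x' i) = _
              rw [dC.pth_mul hn hr hij, if_pos rfl]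
            rw [he]
          · rw [if_neg hr, if_neg hr]
        · intro y' _ hy'
          by_cases hr : S9x.reach n x' y'
          · rw [if_pos hr]
            have he : (h.comp (LinearMap.mulLeft K (S9x.pth n ε a i j)))
                (S9x.pth n ε a x' y') = 0 := by
              show h (S9x.pth n ε a i j * S9x.pth n ε a x' y') = 0
              rw [dC.pth_mul hn hr hij, if_neg hy', map_zero]
            rw [he, zero_smul]
          · rw [if_neg hr]
      rw [lhs_eq]
      have rhs_eq : (∑ x' ∈ Finset.Icc 1 n, (∑ y' ∈ Finset.Icc 1 n,
          if S9x.reach n x' y' then h (S9x.pth n ε a x' y') •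
            S9x.cmpl n κ aP b1 b2 x' y' else 0) * S9x.pth n κ aP i j)
          = ∑ x' ∈ Finset.Icc 1 n,
            if S9x.reach n x' i then h (S9x.pth n ε a x' j) • S9x.cmpl n κ aP b1 b2 x' i
            else 0 := by
        refine Finset.sum_congr rfl fun x' _ => ?_
        rw [Finset.sum_mul]
        rw [Finset.sum_eq_single_of_mem j (hmemIcc hij).2]
        · by_cases hrj : S9x.reach n x' j
          · rw [if_pos hrj, smul_mul_assoc, pP.cmpl_mul_pth hn hij hrj]
            by_cases hri : S9x.reach n x' i
            · rw [if_pos ⟨rfl, hri⟩, if_pos hri]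
            · rw [if_neg (fun hh => hri hh.2), smul_zero, if_neg hri]
          · rw [if_neg hrj, zero_mul, if_neg (fun hh => hrj (S9x.reach_trans hn hh hij))]
        · intro y' _ hy'
          by_cases hr : S9x.reach n x' y'
          · rw [if_pos hr, smul_mul_assoc, pP.cmpl_mul_pth hn hij hr,
              if_neg (fun hh => hy' hh.1), smul_zero]
          · rw [if_neg hr, zero_mul]
      rw [rhs_eq]
    | zero =>
      rw [hml0, LinearMap.comp_zero, map_zero, map_zero, mul_zero]
    | add u v hu hv ihu ihv =>
      have he : LinearMap.mulLeft K (u + v)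
          = LinearMap.mulLeft K u + LinearMap.mulLeft K v := by
        ext c; simp [add_mul]
      rw [he, LinearMap.comp_add, map_add, ihu, ihv, map_add, mul_add]
    | smul k u hu ih =>
      have he : LinearMap.mulLeft K (k • u) = k • LinearMap.mulLeft K u := by
        ext c; simp [smul_mul_assoc]
      have he2 : h.comp (k • LinearMap.mulLeft K u) = k • h.comp (LinearMap.mulLeft K u) := by
        ext c; simp
      rw [he, he2, map_smul, ih, map_smul, mul_smul_comm]
  -- f ∘ φ = eC by uniqueness
  obtain ⟨w, -, hwuniq⟩ := hfree E (fun i => eC (ε i)) (fun i => eC (a i))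
    (fun i h => by show eC (ε i) = 0; rw [hε0 i h, map_zero])
    (fun i h => by show eC (a i) = 0; rw [ha0 i h, map_zero])
    (fun i => by show eC (ε i) * eC (ε i) = eC (ε i); rw [← map_mul, hidem])
    (fun i j h => by
      show eC (ε i) * eC (ε j) = 0
      rw [← map_mul, horth i j h, map_zero])
    (by show (∑ i ∈ Finset.Icc 1 n, eC (ε i)) = 1; rw [← map_sum, hsum, map_one])
    (fun i h1 h2 => ⟨by
      show eC (ε (i + 1)) * eC (a i) = eC (a i)
      rw [← map_mul, (hcomp i h1 h2).1],
      by
      show eC (a i) * eC (ε i) = eC (a i)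
      rw [← map_mul, (hcomp i h1 h2).2]⟩)
    ⟨by
      show eC (ε (n - 1)) * eC (a (n - 2)) = eC (a (n - 2))
      rw [← map_mul, hcomp2.1],
     by
      show eC (a (n - 2)) * eC (ε (n - 2)) = eC (a (n - 2))
      rw [← map_mul, hcomp2.2]⟩
    ⟨by
      show eC (ε n) * eC (a (n - 1)) = eC (a (n - 1))
      rw [← map_mul, hcomp3.1],
     by
      show eC (a (n - 1)) * eC (ε (n - 2)) = eC (a (n - 1))
      rw [← map_mul, hcomp3.2]⟩
  have hfaP : ∀ i, f (aP i) = eC (a i) := by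
    intro i
    by_cases h2 : i = n - 2
    · rw [h2, haP2, hfγ1]
    · by_cases h3 : i = n - 1
      · rw [h3, haP3, hfγ2]
      · by_cases h4 : 1 ≤ i ∧ i ≤ n - 3
        · rw [haPlt i h4.2, hfα i]
          simp only [hαq'def, if_pos h4]
        · rw [dP.ha0 i (by omega), map_zero, ha0 i (by omega), map_zero]
  have hfφ : f.comp φ = eC := by
    have h1 : f.comp φ = w := hwuniq _
      ⟨fun i => by rw [AlgHom.comp_apply, hφε, hfκ],
       fun i => by rw [AlgHom.comp_apply, hφa, hfaP]⟩
    have h2 : eC = w := hwuniq _ ⟨fun i => rfl, fun i => rfl⟩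
    rw [h1, h2]
  have hfφx : ∀ x : C, f (φ x) = eC x := fun x => DFunLike.congr_fun hfφ x
  -- the image of a complement under f
  have hfcmpl : ∀ p q (h : S9x.reach n p q),
      f (S9x.cmpl n κ aP b1 b2 p q)
        = ι.symm (0, B.coord ⟨(p, q), (S9x.mem_pairs hn).2 h⟩) := by
    intro p q h
    have h1p : S9x.reach n 1 p := by unfold S9x.reach at h ⊢; omega
    show f (S9x.pth n κ aP 1 p * S9x.res n κ aP b1 b2 q) = _
    rw [map_mul, ← hφpth 1 p, hfφx]
    by_cases hq2 : q ≤ n - 2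
    · have hres : S9x.res n κ aP b1 b2 q
          = b2 * (aP (n - 1) * S9x.ap κ aP q (n - 2 - q)) := by
        unfold S9x.res; rw [if_pos hq2]
      have e2 : aP (n - 1) * S9x.ap κ aP q (n - 2 - q) = S9x.pth n κ aP q n :=
        (S9x.pth_eq_top2 κ aP hn hq2).symm
      rw [hres, e2, map_mul, ← hφpth q n, hfφx, hfb2, hb2'def]
      rw [hFX (S9x.pth n ε a q n) c2, hXF (S9x.pth n ε a 1 p) _]
      have hqn : S9x.reach n q n := by unfold S9x.reach at h ⊢; omega
      have hfe : (c2.comp (LinearMap.mulLeft K (S9x.pth n ε a q n))).comp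
          (LinearMap.mulRight K (S9x.pth n ε a 1 p))
          = B.coord ⟨(p, q), (S9x.mem_pairs hn).2 h⟩ := by
        apply hext
        intro p' q' h'
        show c2 (S9x.pth n ε a q n * (S9x.pth n ε a p' q' * S9x.pth n ε a 1 p)) = _
        rw [hcoord p q h p' q' h', dC.pth_mul hn h1p h']
        by_cases hp' : p = p'
        · rw [if_pos hp']
          have h1q' : S9x.reach n 1 q' := by unfold S9x.reach at h' ⊢; omega
          rw [dC.pth_mul hn h1q' hqn]
          by_cases hq' : q' = q
          · rw [if_pos hq', hc2 1 n hreach1n, if_pos ⟨rfl, rfl⟩, if_pos ⟨hp'.symm, hq'⟩]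
          · rw [if_neg hq', map_zero, if_neg (fun hh => hq' hh.2)]
        · rw [if_neg hp', mul_zero, map_zero, if_neg (fun hh => hp' hh.1.symm)]
      rw [hfe]
    · by_cases hq1 : q = n - 1
      · have hres : S9x.res n κ aP b1 b2 q = b1 := by
          unfold S9x.res; rw [if_neg hq2, if_pos hq1]
        rw [hres, hfb1, hb1'def, hXF (S9x.pth n ε a 1 p) c1]
        have hfe : c1.comp (LinearMap.mulRight K (S9x.pth n ε a 1 p))
            = B.coord ⟨(p, q), (S9x.mem_pairs hn).2 h⟩ := by
          apply hext
          intro p' q' h'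
          show c1 (S9x.pth n ε a p' q' * S9x.pth n ε a 1 p) = _
          rw [hcoord p q h p' q' h', dC.pth_mul hn h1p h']
          by_cases hp' : p = p'
          · rw [if_pos hp']
            have h1q' : S9x.reach n 1 q' := by unfold S9x.reach at h' ⊢; omega
            rw [hc1 1 q' h1q']
            by_cases hq' : q' = n - 1
            · rw [if_pos ⟨rfl, hq'⟩, if_pos ⟨hp'.symm, hq'.trans hq1.symm⟩]
            · rw [if_neg (fun hh => hq' hh.2),
                if_neg (fun hh => hq' (by rw [hh.2, hq1]))]
          · rw [if_neg hp', map_zero, if_neg (fun hh => hp' hh.1.symm)]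
        rw [hfe]
      · have hqn : q = n := by unfold S9x.reach at h; omega
        have hres : S9x.res n κ aP b1 b2 q = b2 := by
          unfold S9x.res; rw [if_neg hq2, if_neg hq1]
        rw [hres, hfb2, hb2'def, hXF (S9x.pth n ε a 1 p) c2]
        have hfe : c2.comp (LinearMap.mulRight K (S9x.pth n ε a 1 p))
            = B.coord ⟨(p, q), (S9x.mem_pairs hn).2 h⟩ := by
          apply hext
          intro p' q' h'
          show c2 (S9x.pth n ε a p' q' * S9x.pth n ε a 1 p) = _
          rw [hcoord p q h p' q' h', dC.pth_mul hn h1p h']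
          by_cases hp' : p = p'
          · rw [if_pos hp']
            have h1q' : S9x.reach n 1 q' := by unfold S9x.reach at h' ⊢; omega
            rw [hc2 1 q' h1q']
            by_cases hq' : q' = n
            · rw [if_pos ⟨rfl, hq'⟩, if_pos ⟨hp'.symm, hq'.trans hqn.symm⟩]
            · rw [if_neg (fun hh => hq' hh.2),
                if_neg (fun hh => hq' (by rw [hh.2, hqn]))]
          · rw [if_neg hp', map_zero, if_neg (fun hh => hp' hh.1.symm)]
        rw [hfe]
  -- the candidate inverse g : E → P
  set gL : E →ₗ[K] P :=
    (φ.toLinearMap.comp (LinearMap.fst K C (C →ₗ[K] K))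
      + Dm.comp (LinearMap.snd K C (C →ₗ[K] K))).comp ι.toLinearMap with hgLdef
  have hgL : ∀ u : E, gL u = φ (ι u).1 + Dm (ι u).2 := fun u => rfl
  have hgLs : ∀ (x : C) (h : C →ₗ[K] K), gL (ι.symm (x, h)) = φ x + Dm h := by
    intro x h
    rw [hgL, LinearEquiv.apply_symm_apply]
  have hg1 : gL 1 = 1 := by
    rw [hgL, hone]
    show φ 1 + Dm 0 = 1
    rw [map_one, map_zero, add_zero]
  have hgmul : ∀ u v : E, gL (u * v) = gL u * gL v := by
    intro u v
    rw [hgL, hgL, hgL, hmul]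
    show φ ((ι u).1 * (ι v).1)
        + Dm ((ι v).2.comp (LinearMap.mulRight K (ι u).1)
          + (ι u).2.comp (LinearMap.mulLeft K (ι v).1)) = _
    rw [map_mul, map_add, hL1 (ι u).1 (ι v).2, hL2 (ι v).1 (ι u).2]
    rw [mul_add, add_mul, add_mul, hL3 (ι u).2 (ι v).2, add_zero]
    abel
  set g : E →ₐ[K] P := AlgHom.ofLinearMap gL hg1 hgmul with hgdef
  have hgapp : ∀ u : E, g u = gL u := fun u => rfl
  -- g ∘ f = id by uniqueness
  obtain ⟨uP, -, hPuniq⟩ := hPfree P κ αq γ1 γ2 b1 b2 hκ0 hαq0 hκidem hκorth hκsum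
    hαcomp hγ1comp hγ2comp hb1comp hb2comp hrel1 hrel2 hrel3 hrel4
  have hgf : g.comp f = AlgHom.id K P := by
    have h1 : g.comp f = uP := by
      apply hPuniq
      refine ⟨?_, ?_, ?_, ?_, ?_, ?_⟩
      · intro i
        show g (f (κ i)) = κ i
        rw [hfκ i]
        have he : κ' i = ι.symm (ε i, 0) := by simp only [hκ'def]; rw [heCx]
        rw [he, hgapp, hgLs, map_zero, add_zero, hφε]
      · intro i
        show g (f (αq i)) = αq i
        rw [hfα i]
        by_cases h4 : 1 ≤ i ∧ i ≤ n - 3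
        · have he : αq' i = ι.symm (a i, 0) := by
            simp only [hαq'def, if_pos h4]; rw [heCx]
          rw [he, hgapp, hgLs, map_zero, add_zero, hφa, haPlt i h4.2]
        · have he : αq' i = 0 := by simp only [hαq'def, if_neg h4]
          rw [he, map_zero, hαq0 i h4]
      · show g (f γ1) = γ1
        rw [hfγ1, heCx, hgapp, hgLs, map_zero, add_zero, hφa, haP2]
      · show g (f γ2) = γ2
        rw [hfγ2, heCx, hgapp, hgLs, map_zero, add_zero, hφa, haP3]
      · show g (f b1) = b1
        rw [hfb1, hb1'def, hgapp, hgLs, map_zero, zero_add, hc1def,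
          hDcoord 1 (n - 1) hreach1n1]
        show S9x.pth n κ aP 1 1 * S9x.res n κ aP b1 b2 (n - 1) = b1
        rw [dP.pth_self hn (by omega) (by omega)]
        have hres : S9x.res n κ aP b1 b2 (n - 1) = b1 := by
          unfold S9x.res; rw [if_neg (by omega), if_pos rfl]
        rw [hres, hb1comp.1]
      · show g (f b2) = b2
        rw [hfb2, hb2'def, hgapp, hgLs, map_zero, zero_add, hc2def,
          hDcoord 1 n hreach1n]
        show S9x.pth n κ aP 1 1 * S9x.res n κ aP b1 b2 n = b2
        rw [dP.pth_self hn (by omega) (by omega)]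
        have hres : S9x.res n κ aP b1 b2 n = b2 := by
          unfold S9x.res; rw [if_neg (by omega), if_neg (by omega)]
        rw [hres, hb2comp.1]
    have h2 : AlgHom.id K P = uP :=
      hPuniq _ ⟨fun i => rfl, fun i => rfl, rfl, rfl, rfl, rfl⟩
    rw [h1, h2]
  -- f ∘ g = id, checked on the decomposition
  set J : (C →ₗ[K] K) →ₗ[K] E :=
    ι.symm.toLinearMap.comp (LinearMap.inr K C (C →ₗ[K] K)) with hJdef
  have hJ : ∀ h : C →ₗ[K] K, J h = ι.symm (0, h) := fun h => rfl
  set cAt : ℕ → ℕ → (C →ₗ[K] K) := fun x y =>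
    if hr : S9x.reach n x y then B.coord ⟨(x, y), (S9x.mem_pairs hn).2 hr⟩ else 0
    with hcAtdef
  have hcAtr : ∀ p q (h : S9x.reach n p q),
      cAt p q = B.coord ⟨(p, q), (S9x.mem_pairs hn).2 h⟩ := by
    intro p q h
    simp only [hcAtdef]
    rw [dif_pos h]
  have hfDm : ∀ h : C →ₗ[K] K, f (Dm h) = ι.symm (0, h) := by
    intro h
    rw [hDm, map_sum]
    have step : ∀ x ∈ Finset.Icc 1 n,
        f (∑ y ∈ Finset.Icc 1 n,
          if S9x.reach n x y then h (S9x.pth n ε a x y) • S9x.cmpl n κ aP b1 b2 x y else 0)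
        = J (∑ y ∈ Finset.Icc 1 n,
            if S9x.reach n x y then h (S9x.pth n ε a x y) • cAt x y else 0) := by
      intro x _
      rw [map_sum, map_sum]
      refine Finset.sum_congr rfl fun y _ => ?_
      by_cases hr : S9x.reach n x y
      · rw [if_pos hr, if_pos hr, map_smul, map_smul, hfcmpl x y hr, hcAtr x y hr, hJ]
      · rw [if_neg hr, if_neg hr, map_zero, map_zero]
    rw [Finset.sum_congr rfl step, ← map_sum]
    have hdual : (∑ x ∈ Finset.Icc 1 n, ∑ y ∈ Finset.Icc 1 n,
        if S9x.reach n x y then h (S9x.pth n ε a x y) • cAt x y else 0) = h := by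
      apply hext
      intro p q hpq
      rw [LinearMap.sum_apply]
      rw [Finset.sum_eq_single_of_mem p (hmemIcc hpq).1]
      · rw [LinearMap.sum_apply]
        rw [Finset.sum_eq_single_of_mem q (hmemIcc hpq).2]
        · rw [if_pos hpq, LinearMap.smul_apply, hcAtr p q hpq, hcoord p q hpq p q hpq,
            if_pos ⟨rfl, rfl⟩, smul_eq_mul, mul_one]
        · intro y _ hy
          by_cases hr : S9x.reach n p y
          · rw [if_pos hr, LinearMap.smul_apply, hcAtr p y hr, hcoord p y hr p q hpq,
              if_neg (fun hh => hy hh.2.symm), smul_zero]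
          · rw [if_neg hr, LinearMap.zero_apply]
      · intro x _ hx
        rw [LinearMap.sum_apply]
        refine Finset.sum_eq_zero fun y _ => ?_
        by_cases hr : S9x.reach n x y
        · rw [if_pos hr, LinearMap.smul_apply, hcAtr x y hr, hcoord x y hr p q hpq,
            if_neg (fun hh => hx hh.1.symm), smul_zero]
        · rw [if_neg hr, LinearMap.zero_apply]
    rw [hdual, hJ]
  have hfg : ∀ u : E, f (g u) = u := by
    intro u
    rw [hgapp, hgL, map_add, hfφx, hfDm, heCx]
    rw [← map_add]
    have he : ((ι u).1, (0 : C →ₗ[K] K)) + ((0 : C), (ι u).2) = ι u := by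
      rw [Prod.mk_add_mk, add_zero, zero_add]
    rw [he, LinearEquiv.symm_apply_apply]
  exact ⟨AlgEquiv.ofAlgHom g f hgf (AlgHom.ext hfg)⟩
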